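/- arXiv:2009.11146 — 9 statements merged into one kernel-verified Lean document; each statement's English description precedes it below -/
import Mathlib

section
/- For every k₀, there exists a stochastic vector p_{k₀} ∈ ℝ^N with every entry at most c such that the backward product Ȳ_{k₀}^k := Y^k Y^{k−1} ⋯ Y^{k₀} converges to 𝟏 p_{k₀}ᵀ as k → ∞, and moreover ‖Ȳ_{k₀}^k − 𝟏 p_{k₀}ᵀ‖² ≤ 4N² μ^{k−k₀+1} for all k ≥ k₀, where μ := (1 − μ₀^{τH})^{2/(τH)}, ‖·‖ is the matrix spectral norm, and 𝟏 ∈ ℝ^N is the all-ones vector. -/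
namespace BPaux

variable {N : ℕ}

/-- Row-stochastic predicate. -/
def Stoch (A : Matrix (Fin N) (Fin N) ℝ) : Prop :=
  (∀ i j, 0 ≤ A i j) ∧ ∀ i, ∑ j, A i j = 1

lemma stoch_one : Stoch (1 : Matrix (Fin N) (Fin N) ℝ) := by
  constructor
  · intro i j
    by_cases h : i = j <;> simp [Matrix.one_apply, h]
  · intro i; simp [Matrix.one_apply]

lemma Stoch.mul {A B : Matrix (Fin N) (Fin N) ℝ} (hA : Stoch A) (hB : Stoch B) :
    Stoch (A * B) := by
  constructor
  · intro i j
    rw [Matrix.mul_apply]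
    exact Finset.sum_nonneg fun k _ => mul_nonneg (hA.1 i k) (hB.1 k j)
  · intro i
    simp only [Matrix.mul_apply]
    rw [Finset.sum_comm]
    simp only [← Finset.mul_sum, hB.2, mul_one]
    exact hA.2 i

lemma Stoch.le_one {A : Matrix (Fin N) (Fin N) ℝ} (hA : Stoch A) (i j : Fin N) :
    A i j ≤ 1 := by
  calc A i j ≤ ∑ k, A i k :=
        Finset.single_le_sum (fun k _ => hA.1 i k) (Finset.mem_univ j)
    _ = 1 := hA.2 i


/-- Backward product of `b` matrices starting at index `a`:
`S Y a b = Y (a+b-1) * ⋯ * Y (a+1) * Y a`. -/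
noncomputable def S (Y : ℕ → Matrix (Fin N) (Fin N) ℝ) (a b : ℕ) :
    Matrix (Fin N) (Fin N) ℝ :=
  (((List.range b).map fun i => Y (a + i)).reverse).prod

@[simp] lemma S_zero (Y : ℕ → Matrix (Fin N) (Fin N) ℝ) (a : ℕ) : S Y a 0 = 1 := by
  simp [S]

lemma S_succ (Y : ℕ → Matrix (Fin N) (Fin N) ℝ) (a b : ℕ) :
    S Y a (b + 1) = Y (a + b) * S Y a b := by
  simp [S, List.range_succ]

lemma S_add (Y : ℕ → Matrix (Fin N) (Fin N) ℝ) (a b c : ℕ) :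
    S Y a (b + c) = S Y (a + b) c * S Y a b := by
  induction c with
  | zero => simp
  | succ c ih =>
      rw [← Nat.add_assoc, S_succ, ih, S_succ, Nat.add_assoc, mul_assoc]

lemma S_stoch {Y : ℕ → Matrix (Fin N) (Fin N) ℝ} (hY : ∀ k, Stoch (Y k)) (a b : ℕ) :
    Stoch (S Y a b) := by
  induction b with
  | zero => simpa using stoch_one
  | succ b ih => rw [S_succ]; exact (hY (a + b)).mul ih

lemma S_entry_lb {Y : ℕ → Matrix (Fin N) (Fin N) ℝ} {μ₀ : ℝ}
    (hμ₀ : 0 ≤ μ₀)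
    (hY : ∀ k, Stoch (Y k)) (hμ : ∀ k i j, Y k i j ≠ 0 → μ₀ ≤ Y k i j)
    (a b : ℕ) : ∀ i j, S Y a b i j ≠ 0 → μ₀ ^ b ≤ S Y a b i j := by
  induction b with
  | zero => intro i j h; simp only [S_zero] at h ⊢
            rcases eq_or_ne i j with rfl | hne
            · simp [Matrix.one_apply]
            · simp [Matrix.one_apply, hne] at h
  | succ b ih =>
      intro i j h
      rw [S_succ, Matrix.mul_apply] at h ⊢
      obtain ⟨k, -, hk⟩ := Finset.exists_ne_zero_of_sum_ne_zero h
      have h1 : Y (a + b) i k ≠ 0 := fun h' => hk (by simp [h'])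
      have h2 : S Y a b k j ≠ 0 := fun h' => hk (by simp [h'])
      calc μ₀ ^ (b + 1) = μ₀ * μ₀ ^ b := by ring
        _ ≤ Y (a + b) i k * S Y a b k j :=
            mul_le_mul (hμ (a+b) i k h1) (ih k j h2) (pow_nonneg hμ₀ b)
              ((hY (a+b)).1 i k)
        _ ≤ ∑ l, Y (a + b) i l * S Y a b l j := by
            exact Finset.single_le_sum
              (fun l _ => mul_nonneg ((hY (a+b)).1 i l) ((S_stoch hY a b).1 l j))
              (Finset.mem_univ k)


section MinMax

variable [NeZero N]

/-- Column maximum. -/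
noncomputable def mx (A : Matrix (Fin N) (Fin N) ℝ) (j : Fin N) : ℝ :=
  Finset.univ.sup' Finset.univ_nonempty (fun i => A i j)

/-- Column minimum. -/
noncomputable def mn (A : Matrix (Fin N) (Fin N) ℝ) (j : Fin N) : ℝ :=
  Finset.univ.inf' Finset.univ_nonempty (fun i => A i j)

lemma le_mx (A : Matrix (Fin N) (Fin N) ℝ) (i j : Fin N) : A i j ≤ mx A j :=
  Finset.le_sup' (fun i => A i j) (Finset.mem_univ i)

lemma mn_le (A : Matrix (Fin N) (Fin N) ℝ) (i j : Fin N) : mn A j ≤ A i j :=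
  Finset.inf'_le (fun i => A i j) (Finset.mem_univ i)

lemma mn_le_mx (A : Matrix (Fin N) (Fin N) ℝ) (j : Fin N) : mn A j ≤ mx A j :=
  le_trans (mn_le A (Classical.arbitrary _) j) (le_mx A _ j)

lemma mx_le (A : Matrix (Fin N) (Fin N) ℝ) (j : Fin N) {r : ℝ}
    (h : ∀ i, A i j ≤ r) : mx A j ≤ r :=
  Finset.sup'_le _ _ fun i _ => h i

lemma le_mn (A : Matrix (Fin N) (Fin N) ℝ) (j : Fin N) {r : ℝ}
    (h : ∀ i, r ≤ A i j) : r ≤ mn A j :=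
  Finset.le_inf' _ _ fun i _ => h i

/-- The key one-step bounds: multiplying on the left by a stochastic matrix
whose `j₀` column is bounded below by `m` contracts each column's range. -/
lemma mul_bounds {W : Matrix (Fin N) (Fin N) ℝ} (hW : Stoch W) {m : ℝ}
    (hm0 : 0 ≤ m) {j₀ : Fin N} (hcol : ∀ i, m ≤ W i j₀)
    (A : Matrix (Fin N) (Fin N) ℝ) (i j : Fin N) :
    m * A j₀ j + (1 - m) * mn A j ≤ (W * A) i j ∧
      (W * A) i j ≤ m * A j₀ j + (1 - m) * mx A j := by
  set f : Fin N → ℝ := fun k => W i k - if k = j₀ then m else 0 with hf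
  have hf0 : ∀ k, 0 ≤ f k := by
    intro k
    rcases eq_or_ne k j₀ with rfl | hne
    · simpa [hf] using hcol i
    · simpa [hf, hne] using hW.1 i k
  have hfsum : ∑ k, f k = 1 - m := by
    simp [hf, Finset.sum_sub_distrib, hW.2 i]
  have hkey : (W * A) i j = m * A j₀ j + ∑ k, f k * A k j := by
    simp only [hf, sub_mul, ite_mul, zero_mul, Finset.sum_sub_distrib,
      Matrix.mul_apply, Finset.sum_ite_eq']
    simp
  constructor
  · rw [hkey]
    have : (1 - m) * mn A j ≤ ∑ k, f k * A k j := by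
      rw [← hfsum, Finset.sum_mul]
      exact Finset.sum_le_sum fun k _ =>
        mul_le_mul_of_nonneg_left (mn_le A k j) (hf0 k)
    linarith
  · rw [hkey]
    have : ∑ k, f k * A k j ≤ (1 - m) * mx A j := by
      rw [← hfsum, Finset.sum_mul]
      exact Finset.sum_le_sum fun k _ =>
        mul_le_mul_of_nonneg_left (le_mx A k j) (hf0 k)
    linarith

lemma osc_contract {W : Matrix (Fin N) (Fin N) ℝ} (hW : Stoch W) {m : ℝ}
    (hm0 : 0 ≤ m) {j₀ : Fin N} (hcol : ∀ i, m ≤ W i j₀)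
    (A : Matrix (Fin N) (Fin N) ℝ) (j : Fin N) :
    mx (W * A) j - mn (W * A) j ≤ (1 - m) * (mx A j - mn A j) := by
  have h1 : mx (W * A) j ≤ m * A j₀ j + (1 - m) * mx A j :=
    mx_le _ _ fun i => (mul_bounds hW hm0 hcol A i j).2
  have h2 : m * A j₀ j + (1 - m) * mn A j ≤ mn (W * A) j :=
    le_mn _ _ fun i => (mul_bounds hW hm0 hcol A i j).1
  ring_nf
  ring_nf at h1 h2
  linarith

lemma mx_mul_le {W : Matrix (Fin N) (Fin N) ℝ} (hW : Stoch W)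
    (A : Matrix (Fin N) (Fin N) ℝ) (j : Fin N) : mx (W * A) j ≤ mx A j := by
  have := mx_le (W * A) j fun i =>
    (mul_bounds hW le_rfl (fun i => hW.1 i (Classical.arbitrary _)) A i j).2
  simpa using this

lemma le_mn_mul {W : Matrix (Fin N) (Fin N) ℝ} (hW : Stoch W)
    (A : Matrix (Fin N) (Fin N) ℝ) (j : Fin N) : mn A j ≤ mn (W * A) j := by
  have := le_mn (W * A) j fun i =>
    (mul_bounds hW le_rfl (fun i => hW.1 i (Classical.arbitrary _)) A i j).1
  simpa using this

end MinMax

lemma Stoch.pow {M : Matrix (Fin N) (Fin N) ℝ} (hM : Stoch M) (e : ℕ) :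
    Stoch (M ^ e) := by
  induction e with
  | zero => simpa using stoch_one
  | succ e ih => rw [pow_succ]; exact ih.mul hM

lemma entry_pos {A : Matrix (Fin N) (Fin N) ℝ} (hA : ∀ i j, 0 ≤ A i j)
    {i j : Fin N} (h : A i j ≠ 0) : 0 < A i j := lt_of_le_of_ne (hA i j) (Ne.symm h)

lemma mul_ne_zero_of_entries {D X : Matrix (Fin N) (Fin N) ℝ}
    (hD : ∀ i j, 0 ≤ D i j) (hX : ∀ i j, 0 ≤ X i j) {i k j : Fin N}
    (h1 : D i k ≠ 0) (h2 : X k j ≠ 0) : (D * X) i j ≠ 0 := by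
  rw [Matrix.mul_apply]
  have : 0 < ∑ l, D i l * X l j := by
    refine Finset.sum_pos' (fun l _ => mul_nonneg (hD i l) (hX l j)) ?_
    exact ⟨k, Finset.mem_univ k, mul_pos (entry_pos hD h1) (entry_pos hX h2)⟩
  exact ne_of_gt this

lemma pow_diag_ne {M : Matrix (Fin N) (Fin N) ℝ} (hM : Stoch M)
    (hd : ∀ i, M i i ≠ 0) (e : ℕ) : ∀ i, (M ^ e) i i ≠ 0 := by
  induction e with
  | zero => intro i; simp [Matrix.one_apply]
  | succ e ih =>
      intro i
      rw [pow_succ']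
      exact mul_ne_zero_of_entries hM.1 (hM.pow e).1 (hd i) (ih i)

lemma supp_mono {M X Z : Matrix (Fin N) (Fin N) ℝ}
    (hM : ∀ i j, 0 ≤ M i j) (hX : ∀ i j, 0 ≤ X i j) (hZ : ∀ i j, 0 ≤ Z i j)
    (h : ∀ i j, Z i j ≠ 0 → X i j ≠ 0) :
    ∀ i j, (M * Z) i j ≠ 0 → (M * X) i j ≠ 0 := by
  intro i j h0
  rw [Matrix.mul_apply] at h0
  obtain ⟨k, -, hk⟩ := Finset.exists_ne_zero_of_sum_ne_zero h0
  have h1 : M i k ≠ 0 := fun h' => hk (by simp [h'])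
  have h2 : Z k j ≠ 0 := fun h' => hk (by simp [h'])
  exact mul_ne_zero_of_entries hM hX h1 (h k j h2)

/-- Any window of length `τ * Hc` has a column with all entries nonzero. -/
lemma window_pos_col {Y : ℕ → Matrix (Fin N) (Fin N) ℝ}
    {𝔽 : Finset (Matrix (Fin N) (Fin N) ℝ)} {τ Hc : ℕ}
    (hYS : ∀ k, Stoch (Y k)) (hdiag : ∀ k i, Y k i i ≠ 0)
    (hmem : ∀ k, Y k ∈ 𝔽) (hcard : 𝔽.card ≤ Hc)
    (hτcol : ∀ A ∈ 𝔽, (∀ i j, 0 ≤ A i j) ∧ ∃ j, ∀ i, (A ^ τ) i j ≠ 0)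
    (hτ : 1 ≤ τ)
    (a : ℕ) : ∃ j₀, ∀ i, S Y a (τ * Hc) i j₀ ≠ 0 := by
  obtain ⟨M, hMF, hMcount⟩ :=
    Finset.exists_le_card_fiber_of_mul_le_card_of_maps_to
      (s := Finset.range (τ * Hc)) (f := fun t => Y (a + t)) (t := 𝔽) (n := τ)
      (fun t _ => hmem (a + t)) ⟨Y 0, hmem 0⟩
      (by rw [Finset.card_range]
          calc 𝔽.card * τ ≤ Hc * τ := Nat.mul_le_mul_right τ hcard
            _ = τ * Hc := Nat.mul_comm Hc τ)
  obtain ⟨k, hk⟩ : ∃ k, Y k = M := by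
    have hne : ((Finset.range (τ * Hc)).filter fun t => Y (a + t) = M).Nonempty := by
      apply Finset.card_pos.mp; omega
    obtain ⟨t, ht⟩ := hne
    exact ⟨a + t, (Finset.mem_filter.mp ht).2⟩
  have hMS : Stoch M := hk ▸ hYS k
  have hMd : ∀ i, M i i ≠ 0 := hk ▸ hdiag k
  -- support of the partial products contains the support of powers of M
  have key : ∀ b, ∀ i j,
      (M ^ ((Finset.range b).filter fun t => Y (a + t) = M).card) i j ≠ 0 →
      S Y a b i j ≠ 0 := by
    intro b
    induction b with
    | zero => intro i j h; simpa using h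
    | succ b ih =>
        intro i j h
        rw [Finset.range_add_one, Finset.filter_insert] at h
        rw [S_succ]
        by_cases hYb : Y (a + b) = M
        · rw [if_pos hYb, Finset.card_insert_of_notMem (by simp)] at h
          rw [pow_succ'] at h
          rw [hYb]
          exact supp_mono hMS.1 (S_stoch hYS a b).1
            (hMS.pow _).1 ih i j h
        · rw [if_neg hYb] at h
          exact mul_ne_zero_of_entries (hYS (a+b)).1 (S_stoch hYS a b).1
            (hdiag (a+b) i) (ih i j h)
  obtain ⟨j₀, hj₀⟩ := (hτcol M hMF).2
  refine ⟨j₀, fun i => ?_⟩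
  set T := (Finset.range (τ * Hc)).filter fun t => Y (a + t) = M with hT
  have hcardT : τ ≤ T.card := hMcount
  refine key _ i j₀ ?_
  have : M ^ T.card = M ^ (T.card - τ) * M ^ τ := by
    rw [← pow_add, Nat.sub_add_cancel hcardT]
  rw [this]
  exact mul_ne_zero_of_entries (hMS.pow _).1 (hMS.pow _).1
    (pow_diag_ne hMS hMd _ i) (hj₀ i)

lemma opNorm_le_of_entries [NeZero N] {E : Matrix (Fin N) (Fin N) ℝ} {t : ℝ} (ht : 0 ≤ t)
    (h : ∀ i j, |E i j| ≤ t) :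
    ‖Matrix.toEuclideanCLM (𝕜 := ℝ) (n := Fin N) E‖ ≤ N * t := by
  apply ContinuousLinearMap.opNorm_le_bound _ (by positivity)
  intro x
  have happ : ∀ i, (Matrix.toEuclideanCLM (𝕜 := ℝ) E) x i = ∑ j, E i j * x j := by
    intro i
    have h' := congrFun (Matrix.ofLp_toEuclideanCLM (𝕜 := ℝ) E x) i
    simpa [Matrix.mulVec, dotProduct] using h'
  have hxn : ∑ j, |x j| ^ 2 = ‖x‖ ^ 2 := by
    rw [EuclideanSpace.norm_eq, Real.sq_sqrt (by positivity)]
    simp [Real.norm_eq_abs]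
  have hrow : ∀ i, |(Matrix.toEuclideanCLM (𝕜 := ℝ) E) x i| ≤ t * ∑ j, |x j| := by
    intro i
    rw [happ i]
    calc |∑ j, E i j * x j| ≤ ∑ j, |E i j * x j| := Finset.abs_sum_le_sum_abs _ _
      _ ≤ ∑ j, t * |x j| := Finset.sum_le_sum fun j _ => by
            rw [abs_mul]; exact mul_le_mul_of_nonneg_right (h i j) (abs_nonneg _)
      _ = t * ∑ j, |x j| := by rw [Finset.mul_sum]
  have hCS : (∑ j, |x j|) ^ 2 ≤ N * ∑ j, |x j| ^ 2 := by
    simpa using sq_sum_le_card_mul_sum_sq (s := Finset.univ) (f := fun j : Fin N => |x j|)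
  have hnorm2 : ‖(Matrix.toEuclideanCLM (𝕜 := ℝ) E) x‖ ^ 2 ≤ ((N : ℝ) * t * ‖x‖) ^ 2 := by
    rw [EuclideanSpace.norm_eq, Real.sq_sqrt (by positivity)]
    have hb : ∑ i, ‖(Matrix.toEuclideanCLM (𝕜 := ℝ) E) x i‖ ^ 2
        ≤ ∑ _i : Fin N, (t * ∑ j, |x j|) ^ 2 := by
      refine Finset.sum_le_sum fun i _ => ?_
      rw [Real.norm_eq_abs]
      exact pow_le_pow_left₀ (abs_nonneg _) (hrow i) 2
    have hb' : ∑ _i : Fin N, (t * ∑ j, |x j|) ^ 2 = N * (t * ∑ j, |x j|) ^ 2 := by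
      simp [Finset.sum_const, nsmul_eq_mul]
    have hNt : (0:ℝ) ≤ (N : ℝ) * t ^ 2 := by positivity
    have hstep := mul_le_mul_of_nonneg_left hCS hNt
    calc ∑ i, ‖(Matrix.toEuclideanCLM (𝕜 := ℝ) E) x i‖ ^ 2
        ≤ (N : ℝ) * (t * ∑ j, |x j|) ^ 2 := hb.trans (le_of_eq hb')
      _ = (N : ℝ) * t ^ 2 * (∑ j, |x j|) ^ 2 := by ring
      _ ≤ (N : ℝ) * t ^ 2 * ((N : ℝ) * ∑ j, |x j| ^ 2) := hstep
      _ = ((N : ℝ) * t * ‖x‖) ^ 2 := by rw [hxn]; ring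
  have h2 := (pow_le_pow_iff_left₀ (norm_nonneg _) (by positivity) two_ne_zero).mp hnorm2
  exact h2

lemma arith {lam : ℝ} (h1 : 1/2 ≤ lam) (h2 : lam ≤ 1) {L n : ℕ} (hL : 1 ≤ L) :
    (lam ^ (n / L)) ^ 2 ≤ 4 * (lam ^ ((2:ℝ)/(L:ℝ))) ^ n := by
  have hl0 : (0:ℝ) < lam := by linarith
  set q := n / L with hq
  have hnlt : n < L * (q + 1) := Nat.lt_mul_div_succ n (by omega)
  have hLr : (0:ℝ) < L := by exact_mod_cast (show 0 < L by omega)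
  have hexp : (2:ℝ)/L * n - 2 ≤ 2 * q := by
    have hnr : (n:ℝ) < (L:ℝ) * (q + 1) := by exact_mod_cast hnlt
    rw [div_mul_eq_mul_div, sub_le_iff_le_add, div_le_iff₀ hLr]
    nlinarith
  have hrw : (lam ^ ((2:ℝ)/L)) ^ n = lam ^ ((2:ℝ)/L * n) := by
    rw [← Real.rpow_natCast (lam ^ ((2:ℝ)/L)) n, ← Real.rpow_mul hl0.le]
  have hlhs : (lam ^ q) ^ 2 = lam ^ (((2 * q : ℕ) : ℕ) : ℝ) := by
    rw [Real.rpow_natCast, ← pow_mul, mul_comm q 2]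
  have hmain : lam ^ (((2 * q : ℕ) : ℕ) : ℝ) ≤ lam ^ ((2:ℝ)/L * n - 2) := by
    apply Real.rpow_le_rpow_of_exponent_ge hl0 h2
    push_cast
    linarith
  have hsub : lam ^ ((2:ℝ)/L * n - 2) = lam ^ ((2:ℝ)/L * n) / lam ^ (2:ℝ) :=
    Real.rpow_sub hl0 _ _
  have h4 : lam ^ ((2:ℝ)/L * n) / lam ^ (2:ℝ) ≤ 4 * lam ^ ((2:ℝ)/L * n) := by
    rw [Real.rpow_two, div_le_iff₀ (by positivity)]
    have hX : 0 ≤ lam ^ ((2:ℝ)/L * n) := Real.rpow_nonneg hl0.le _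
    nlinarith [mul_nonneg hX (mul_nonneg (by linarith : (0:ℝ) ≤ 2*lam-1)
      (by linarith : (0:ℝ) ≤ 2*lam+1))]
  calc (lam ^ q) ^ 2 = lam ^ (((2 * q : ℕ) : ℕ) : ℝ) := hlhs
    _ ≤ lam ^ ((2:ℝ)/L * n - 2) := hmain
    _ = lam ^ ((2:ℝ)/L * n) / lam ^ (2:ℝ) := hsub
    _ ≤ 4 * lam ^ ((2:ℝ)/L * n) := h4
    _ = 4 * (lam ^ ((2:ℝ)/L)) ^ n := by rw [hrw]

end BPaux

/-- The backward product `Ȳ_{k₀}^k = Y^k Y^{k-1} ⋯ Y^{k₀}` of a sequence of matrices. -/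
noncomputable def backProd {N : ℕ} (Y : ℕ → Matrix (Fin N) (Fin N) ℝ) (k₀ k : ℕ) :
    Matrix (Fin N) (Fin N) ℝ :=
  (((List.range (k - k₀ + 1)).map fun i => Y (k₀ + i)).reverse).prod

/-- for every `k₀` there is a stochastic vector `p` with entries at most `c`
such that the backward products `Ȳ_{k₀}^k` converge to `𝟏pᵀ`, with
`‖Ȳ_{k₀}^k - 𝟏pᵀ‖² ≤ 4N²μ^{k-k₀+1}` in the spectral norm, where
`μ = (1-μ₀^{τH})^{2/(τH)}`. -/
theorem backward_product_convergence
    (N τ Hc : ℕ) (hN : 1 ≤ N) (hτ : 1 ≤ τ) (hH : 1 ≤ Hc)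
    (μ₀ c : ℝ) (hμ₀0 : 0 < μ₀) (hμ₀1 : μ₀ ≤ 1 / 2) (hc : 0 < c)
    (𝔽 : Finset (Matrix (Fin N) (Fin N) ℝ)) (hcard : 𝔽.card ≤ Hc)
    (h𝔽 : ∀ Y ∈ 𝔽,
      (∀ i j, 0 ≤ Y i j ∧ Y i j ≤ 1) ∧ (∀ i, ∑ j, Y i j = 1) ∧
      (∀ i, Y i i ≠ 0) ∧ (∀ i j, Y i j ≠ 0 → μ₀ ≤ Y i j) ∧
      (∀ i j, Y i j ≤ c) ∧ (∃ j, ∀ i, (Y ^ τ) i j ≠ 0))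
    (Y : ℕ → Matrix (Fin N) (Fin N) ℝ) (hY : ∀ k, Y k ∈ 𝔽) :
    ∀ k₀ : ℕ, ∃ p : Fin N → ℝ,
      (∀ i, 0 ≤ p i ∧ p i ≤ 1) ∧ (∑ i, p i = 1) ∧ (∀ i, p i ≤ c) ∧
      Filter.Tendsto (fun k => backProd Y k₀ k) Filter.atTop
        (nhds (Matrix.vecMulVec (fun _ => 1) p)) ∧
      ∀ k, k₀ ≤ k →
        ‖Matrix.toEuclideanCLM (𝕜 := ℝ) (n := Fin N)
            (backProd Y k₀ k - Matrix.vecMulVec (fun _ => 1) p)‖ ^ 2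
          ≤ 4 * (N : ℝ) ^ 2
            * (((1 - μ₀ ^ (τ * Hc)) ^ ((2 : ℝ) / ((τ : ℝ) * Hc))) ^ (k - k₀ + 1)) := by
  intro k₀
  haveI : NeZero N := ⟨by omega⟩
  set L := τ * Hc with hLdef
  have hL1 : 1 ≤ L := Nat.mul_le_mul hτ hH
  have hYS : ∀ k, BPaux.Stoch (Y k) := fun k =>
    ⟨fun i j => ((h𝔽 _ (hY k)).1 i j).1, (h𝔽 _ (hY k)).2.1⟩
  have hdiag : ∀ k i, Y k i i ≠ 0 := fun k => (h𝔽 _ (hY k)).2.2.1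
  have hμ : ∀ k i j, Y k i j ≠ 0 → μ₀ ≤ Y k i j := fun k => (h𝔽 _ (hY k)).2.2.2.1
  have hτcol : ∀ A ∈ 𝔽, (∀ i j, 0 ≤ A i j) ∧ ∃ j, ∀ i, (A ^ τ) i j ≠ 0 := fun A hA =>
    ⟨fun i j => ((h𝔽 A hA).1 i j).1, (h𝔽 A hA).2.2.2.2.2⟩
  set lam := 1 - μ₀ ^ L with hlamdef
  have hm0 : (0:ℝ) ≤ μ₀ ^ L := pow_nonneg hμ₀0.le L
  have hmhalf : μ₀ ^ L ≤ 1/2 := by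
    calc μ₀ ^ L ≤ (1/2 : ℝ) ^ L := pow_le_pow_left₀ hμ₀0.le hμ₀1 L
      _ ≤ (1/2 : ℝ) ^ 1 := pow_le_pow_of_le_one (by norm_num) (by norm_num) hL1
      _ = 1/2 := pow_one _
  have hlam_half : 1/2 ≤ lam := by rw [hlamdef]; linarith
  have hlam0 : (0:ℝ) ≤ lam := by linarith
  have hlam1' : lam < 1 := by
    rw [hlamdef]
    have := pow_pos hμ₀0 L
    linarith
  have hSst : ∀ a b, BPaux.Stoch (BPaux.S Y a b) := BPaux.S_stoch hYS
  have hwin : ∀ a (A : Matrix (Fin N) (Fin N) ℝ) j,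
      BPaux.mx (BPaux.S Y a L * A) j - BPaux.mn (BPaux.S Y a L * A) j
        ≤ lam * (BPaux.mx A j - BPaux.mn A j) := by
    intro a A j
    obtain ⟨j₀, hj₀⟩ := BPaux.window_pos_col hYS hdiag hY hcard hτcol hτ a
    have hcol : ∀ i, μ₀ ^ L ≤ BPaux.S Y a L i j₀ := fun i =>
      BPaux.S_entry_lb hμ₀0.le hYS hμ a L i j₀ (hj₀ i)
    rw [hlamdef]
    exact BPaux.osc_contract (hSst a L) hm0 hcol A j
  have hoscq : ∀ q j,
      BPaux.mx (BPaux.S Y k₀ (L * q)) j - BPaux.mn (BPaux.S Y k₀ (L * q)) j ≤ lam ^ q := by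
    intro q
    induction q with
    | zero =>
        intro j
        simp only [Nat.mul_zero, BPaux.S_zero, pow_zero]
        have h1 := BPaux.mx_le (1 : Matrix (Fin N) (Fin N) ℝ) j
          (fun i => BPaux.stoch_one.le_one i j)
        have h2 := BPaux.le_mn (1 : Matrix (Fin N) (Fin N) ℝ) j
          (fun i => BPaux.stoch_one.1 i j)
        linarith
    | succ q ih =>
        intro j
        have hsplit : BPaux.S Y k₀ (L * (q+1))
            = BPaux.S Y (k₀ + L * q) L * BPaux.S Y k₀ (L * q) := by
          rw [Nat.mul_succ]
          exact BPaux.S_add Y k₀ (L * q) L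
        rw [hsplit, pow_succ]
        calc BPaux.mx (BPaux.S Y (k₀ + L * q) L * BPaux.S Y k₀ (L * q)) j
              - BPaux.mn (BPaux.S Y (k₀ + L * q) L * BPaux.S Y k₀ (L * q)) j
            ≤ lam * (BPaux.mx (BPaux.S Y k₀ (L * q)) j - BPaux.mn (BPaux.S Y k₀ (L * q)) j) :=
              hwin _ _ j
          _ ≤ lam * lam ^ q := mul_le_mul_of_nonneg_left (ih j) hlam0
          _ = lam ^ q * lam := mul_comm _ _
  have hosc : ∀ n j,
      BPaux.mx (BPaux.S Y k₀ n) j - BPaux.mn (BPaux.S Y k₀ n) j ≤ lam ^ (n / L) := by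
    intro n j
    have hsplit : BPaux.S Y k₀ n
        = BPaux.S Y (k₀ + L * (n / L)) (n % L) * BPaux.S Y k₀ (L * (n / L)) := by
      conv_lhs => rw [show n = L * (n / L) + n % L from (Nat.div_add_mod n L).symm]
      exact BPaux.S_add Y k₀ _ _
    rw [hsplit]
    have h1 := BPaux.mx_mul_le (hSst (k₀ + L * (n / L)) (n % L)) (BPaux.S Y k₀ (L * (n / L))) j
    have h2 := BPaux.le_mn_mul (hSst (k₀ + L * (n / L)) (n % L)) (BPaux.S Y k₀ (L * (n / L))) j
    have h3 := hoscq (n / L) j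
    linarith
  have hnest : ∀ {n n' : ℕ}, n ≤ n' → ∀ j,
      BPaux.mn (BPaux.S Y k₀ n) j ≤ BPaux.mn (BPaux.S Y k₀ n') j ∧
      BPaux.mx (BPaux.S Y k₀ n') j ≤ BPaux.mx (BPaux.S Y k₀ n) j := by
    intro n n' h j
    have hsplit : BPaux.S Y k₀ n' = BPaux.S Y (k₀ + n) (n' - n) * BPaux.S Y k₀ n := by
      conv_lhs => rw [show n' = n + (n' - n) by omega]
      exact BPaux.S_add Y k₀ n (n' - n)
    rw [hsplit]
    exact ⟨BPaux.le_mn_mul (hSst _ _) _ j, BPaux.mx_mul_le (hSst _ _) _ j⟩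
  have hBdd : ∀ j, BddAbove (Set.range fun n => BPaux.mn (BPaux.S Y k₀ n) j) := by
    intro j
    refine ⟨1, ?_⟩
    rintro r ⟨n, rfl⟩
    exact le_trans (BPaux.mn_le _ (Classical.arbitrary _) j) ((hSst k₀ n).le_one _ j)
  set p : Fin N → ℝ := fun j => ⨆ n, BPaux.mn (BPaux.S Y k₀ n) j with hpdef
  have hp_ge : ∀ n j, BPaux.mn (BPaux.S Y k₀ n) j ≤ p j := fun n j => le_ciSup (hBdd j) n
  have hp_le : ∀ n j, p j ≤ BPaux.mx (BPaux.S Y k₀ n) j := by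
    intro n j
    refine ciSup_le fun n' => ?_
    rcases le_total n n' with h | h
    · exact le_trans (BPaux.mn_le_mx _ j) (hnest h j).2
    · exact le_trans (hnest h j).1 (BPaux.mn_le_mx _ j)
  have hS1 : BPaux.S Y k₀ 1 = Y k₀ := by
    have := BPaux.S_succ Y k₀ 0
    simpa using this
  have hp0 : ∀ j, 0 ≤ p j := fun j =>
    le_trans (BPaux.le_mn _ j fun i => (hSst k₀ 0).1 i j) (hp_ge 0 j)
  have hp1 : ∀ j, p j ≤ 1 := fun j =>
    le_trans (hp_le 0 j) (BPaux.mx_le _ j fun i => (hSst k₀ 0).le_one i j)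
  have hpc : ∀ j, p j ≤ c := by
    intro j
    refine le_trans (hp_le 1 j) (BPaux.mx_le _ j fun i => ?_)
    rw [hS1]
    exact (h𝔽 _ (hY k₀)).2.2.2.2.1 i j
  have hkey : ∀ n i j, |BPaux.S Y k₀ n i j - p j| ≤ lam ^ (n / L) := by
    intro n i j
    have h1 := BPaux.mn_le (BPaux.S Y k₀ n) i j
    have h2 := BPaux.le_mx (BPaux.S Y k₀ n) i j
    have h3 := hp_ge n j
    have h4 := hp_le n j
    have h5 := hosc n j
    rw [abs_le]
    constructor <;> linarith
  have htend0 : Filter.Tendsto (fun n : ℕ => lam ^ (n / L)) Filter.atTop (nhds 0) := by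
    refine (tendsto_pow_atTop_nhds_zero_of_lt_one hlam0 hlam1').comp ?_
    refine Filter.tendsto_atTop_atTop.mpr fun b => ⟨L * b, fun n hn => ?_⟩
    refine (Nat.le_div_iff_mul_le (by omega)).mpr ?_
    calc b * L = L * b := Nat.mul_comm b L
      _ ≤ n := hn
  have htendS : ∀ i j,
      Filter.Tendsto (fun n => BPaux.S Y k₀ n i j) Filter.atTop (nhds (p j)) := by
    intro i j
    have := squeeze_zero_norm (f := fun n => BPaux.S Y k₀ n i j - p j)
      (fun n => hkey n i j) htend0
    exact tendsto_sub_nhds_zero_iff.mp this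
  have hsump : ∑ j, p j = 1 := by
    have i₀ : Fin N := Classical.arbitrary _
    have h1 : Filter.Tendsto (fun n => ∑ j, BPaux.S Y k₀ n i₀ j) Filter.atTop
        (nhds (∑ j, p j)) := tendsto_finset_sum _ fun j _ => htendS i₀ j
    have h2 : (fun n => ∑ j, BPaux.S Y k₀ n i₀ j) = fun _ => (1:ℝ) :=
      funext fun n => (hSst k₀ n).2 i₀
    rw [h2] at h1
    exact tendsto_nhds_unique h1 tendsto_const_nhds
  refine ⟨p, fun j => ⟨hp0 j, hp1 j⟩, hsump, hpc, ?_, ?_⟩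
  · have hmat : Filter.Tendsto (fun n => BPaux.S Y k₀ n) Filter.atTop
        (nhds (Matrix.vecMulVec (fun _ => 1) p)) := by
      refine tendsto_pi_nhds.mpr fun i => tendsto_pi_nhds.mpr fun j => ?_
      simpa [Matrix.vecMulVec_apply] using htendS i j
    have hcomp : Filter.Tendsto (fun k : ℕ => k - k₀ + 1) Filter.atTop Filter.atTop :=
      (Filter.tendsto_add_atTop_nat 1).comp (Filter.tendsto_sub_atTop_nat k₀)
    exact hmat.comp hcomp
  · intro k hk
    set n := k - k₀ + 1 with hndef
    have hBS : backProd Y k₀ k = BPaux.S Y k₀ n := rfl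
    have hE : ∀ i j : Fin N,
        |(backProd Y k₀ k - Matrix.vecMulVec (fun _ : Fin N => (1:ℝ)) p) i j| ≤ lam ^ (n / L) := by
      intro i j
      have heq : (backProd Y k₀ k - Matrix.vecMulVec (fun _ : Fin N => (1:ℝ)) p) i j
          = BPaux.S Y k₀ n i j - p j := by
        rw [Matrix.sub_apply, hBS, Matrix.vecMulVec_apply, one_mul]
      rw [heq]
      exact hkey n i j
    have hop := BPaux.opNorm_le_of_entries (pow_nonneg hlam0 _) hE
    have hsq : ‖Matrix.toEuclideanCLM (𝕜 := ℝ) (n := Fin N)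
        (backProd Y k₀ k - Matrix.vecMulVec (fun _ => 1) p)‖ ^ 2
        ≤ ((N : ℝ) * lam ^ (n / L)) ^ 2 := pow_le_pow_left₀ (norm_nonneg _) hop 2
    have har := BPaux.arith hlam_half hlam1'.le (L := L) (n := n) hL1
    have hcast : ((τ : ℝ) * Hc) = (L : ℝ) := by rw [hLdef]; push_cast; ring
    rw [hcast]
    calc ‖Matrix.toEuclideanCLM (𝕜 := ℝ) (n := Fin N)
          (backProd Y k₀ k - Matrix.vecMulVec (fun _ => 1) p)‖ ^ 2
        ≤ ((N : ℝ) * lam ^ (n / L)) ^ 2 := hsq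
      _ = (N : ℝ) ^ 2 * (lam ^ (n / L)) ^ 2 := by ring
      _ ≤ (N : ℝ) ^ 2 * (4 * (lam ^ ((2:ℝ)/(L:ℝ))) ^ n) :=
          mul_le_mul_of_nonneg_left har (by positivity)
      _ = 4 * (N : ℝ) ^ 2 * (lam ^ ((2:ℝ)/(L:ℝ))) ^ n := by ring
end

section
/- If W₁, …, W_{τH} is any sequence of τH matrices all belonging to 𝔽, then the product W_{τH} W_{τH−1} ⋯ W₁ has at least one column all of whose entries are at least μ₀^{τH}. -/
private lemma prod_entries_nonneg {N : ℕ} (L : List (Matrix (Fin N) (Fin N) ℝ))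
    (h : ∀ A ∈ L, ∀ i j, 0 ≤ A i j) : ∀ i j, 0 ≤ L.prod i j := by
  induction L with
  | nil =>
    intro i j
    rw [List.prod_nil]
    by_cases hij : i = j <;> simp [Matrix.one_apply, hij]
  | cons A L ih =>
    intro i j
    rw [List.prod_cons, Matrix.mul_apply]
    refine Finset.sum_nonneg fun l _ => mul_nonneg (h A (List.mem_cons_self) i l) ?_
    exact ih (fun B hB => h B (List.mem_cons_of_mem _ hB)) l j

private lemma prod_entries_lb {N : ℕ} {μ₀ : ℝ} (hμ : 0 < μ₀)
    (L : List (Matrix (Fin N) (Fin N) ℝ))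
    (h : ∀ A ∈ L, (∀ i j, 0 ≤ A i j) ∧ (∀ i j, A i j ≠ 0 → μ₀ ≤ A i j)) :
    ∀ i j, L.prod i j ≠ 0 → μ₀ ^ L.length ≤ L.prod i j := by
  induction L with
  | nil =>
    intro i j hne
    rw [List.prod_nil] at *
    by_cases hij : i = j
    · simp [Matrix.one_apply, hij]
    · simp [Matrix.one_apply, hij] at hne
  | cons A L ih =>
    intro i j hne
    have hnonnegL : ∀ B ∈ L, ∀ i j, 0 ≤ B i j := fun B hB => (h B (List.mem_cons_of_mem _ hB)).1
    have hA := h A (List.mem_cons_self)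
    rw [List.prod_cons, Matrix.mul_apply] at hne ⊢
    have hterm_nonneg : ∀ l ∈ Finset.univ, (0:ℝ) ≤ A i l * L.prod l j := fun l _ =>
      mul_nonneg (hA.1 i l) (prod_entries_nonneg L hnonnegL l j)
    have hsum_pos : (0:ℝ) < ∑ l, A i l * L.prod l j :=
      lt_of_le_of_ne (Finset.sum_nonneg hterm_nonneg) (Ne.symm hne)
    obtain ⟨l, -, hl⟩ := Finset.exists_lt_of_sum_lt (f := fun _ => (0:ℝ)) (g := fun l => A i l * L.prod l j) (by simpa using hsum_pos)
    have hAl : 0 < A i l := by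
      rcases (hA.1 i l).lt_or_eq with h' | h'
      · exact h'
      · rw [← h', zero_mul] at hl; exact absurd hl (lt_irrefl 0)
    have hPl : 0 < L.prod l j := by
      rcases (prod_entries_nonneg L hnonnegL l j).lt_or_eq with h' | h'
      · exact h'
      · rw [← h', mul_zero] at hl; exact absurd hl (lt_irrefl 0)
    have h1 : μ₀ ≤ A i l := hA.2 i l hAl.ne'
    have h2 : μ₀ ^ L.length ≤ L.prod l j :=
      ih (fun B hB => h B (List.mem_cons_of_mem _ hB)) l j hPl.ne'
    calc μ₀ ^ (A :: L).length = μ₀ * μ₀ ^ L.length := by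
          rw [List.length_cons, pow_succ']
      _ ≤ A i l * L.prod l j :=
          mul_le_mul h1 h2 (pow_nonneg hμ.le _) (le_trans hμ.le h1)
      _ ≤ ∑ l, A i l * L.prod l j :=
          Finset.single_le_sum hterm_nonneg (Finset.mem_univ l)

private lemma prod_pos_of_sublist {N : ℕ} {μ₀ : ℝ} (hμ : 0 < μ₀)
    {l₁ l₂ : List (Matrix (Fin N) (Fin N) ℝ)} (hs : l₁.Sublist l₂) :
    (∀ A ∈ l₂, (∀ i j, 0 ≤ A i j) ∧ (∀ i, μ₀ ≤ A i i)) →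
    ∀ i j, 0 < l₁.prod i j → 0 < l₂.prod i j := by
  induction hs with
  | slnil => exact fun _ i j h => h
  | @cons l₁ l₂ a hs ih =>
    intro h2 i j h
    have h2' := fun A hA => h2 A (List.mem_cons_of_mem _ hA)
    have hp := ih h2' i j h
    have ha := h2 a (List.mem_cons_self)
    rw [List.prod_cons, Matrix.mul_apply]
    have key : 0 < a i i * l₂.prod i j := mul_pos (lt_of_lt_of_le hμ (ha.2 i)) hp
    refine lt_of_lt_of_le key (Finset.single_le_sum (f := fun l => a i l * l₂.prod l j)
      ?_ (Finset.mem_univ i))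
    intro l _
    exact mul_nonneg (ha.1 i l)
      (prod_entries_nonneg l₂ (fun B hB => (h2' B hB).1) l j)
  | @cons_cons l₁ l₂ a hs ih =>
    intro h2 i j h
    have h2' := fun A hA => h2 A (List.mem_cons_of_mem _ hA)
    have ha := h2 a (List.mem_cons_self)
    have hnn1 : ∀ B ∈ l₁, ∀ i j, 0 ≤ B i j := fun B hB => (h2' B (hs.subset hB)).1
    rw [List.prod_cons, Matrix.mul_apply] at h
    obtain ⟨l, -, hl⟩ := Finset.exists_lt_of_sum_lt (f := fun _ => (0:ℝ)) (g := fun l => a i l * l₁.prod l j) (by simpa using h)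
    have hal : 0 < a i l := by
      rcases (ha.1 i l).lt_or_eq with h' | h'
      · exact h'
      · rw [← h', zero_mul] at hl; exact absurd hl (lt_irrefl 0)
    have hPl : 0 < l₁.prod l j := by
      rcases (prod_entries_nonneg l₁ hnn1 l j).lt_or_eq with h' | h'
      · exact h'
      · rw [← h', mul_zero] at hl; exact absurd hl (lt_irrefl 0)
    have hp2 : 0 < l₂.prod l j := ih h2' l j hPl
    rw [List.prod_cons, Matrix.mul_apply]
    refine lt_of_lt_of_le (mul_pos hal hp2) (Finset.single_le_sum
      (f := fun m => a i m * l₂.prod m j) ?_ (Finset.mem_univ l))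
    intro m _
    exact mul_nonneg (ha.1 i m)
      (prod_entries_nonneg l₂ (fun B hB => (h2' B hB).1) m j)

/-- any product `W_{τH} ⋯ W_1` of `τH` matrices from the family `𝔽`
has at least one column all of whose entries are at least `μ₀^{τH}`. -/
theorem product_column_lower_bound
    (N τ Hc : ℕ) (hN : 1 ≤ N) (hτ : 1 ≤ τ) (hH : 1 ≤ Hc)
    (μ₀ : ℝ) (hμ₀0 : 0 < μ₀) (hμ₀1 : μ₀ ≤ 1)
    (𝔽 : Finset (Matrix (Fin N) (Fin N) ℝ)) (hcard : 𝔽.card ≤ Hc)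
    (h𝔽 : ∀ Y ∈ 𝔽, (∀ i j, 0 ≤ Y i j) ∧ (∀ i, μ₀ ≤ Y i i) ∧
      (∀ i j, Y i j ≠ 0 → μ₀ ≤ Y i j) ∧ (∃ j, ∀ i, (Y ^ τ) i j ≠ 0))
    (W : Fin (τ * Hc) → Matrix (Fin N) (Fin N) ℝ) (hW : ∀ i, W i ∈ 𝔽) :
    ∃ j, ∀ i, μ₀ ^ (τ * Hc) ≤ (List.ofFn W).reverse.prod i j := by
  classical
  set L := (List.ofFn W).reverse with hL
  have hlen : L.length = τ * Hc := by simp [hL]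
  have hmem : ∀ A ∈ L, A ∈ 𝔽 := by
    intro A hA
    rw [hL, List.mem_reverse, List.mem_ofFn] at hA
    obtain ⟨i, rfl⟩ := hA
    exact hW i
  -- pigeonhole: some Y occurs at least τ times in L
  have hpigeon : ∃ Y ∈ 𝔽, τ ≤ L.count Y := by
    by_contra hcon
    push_neg at hcon
    have hsum : ∑ a ∈ L.toFinset, L.count a = L.length := List.sum_toFinset_count_eq_length L
    have hsub : L.toFinset ⊆ 𝔽 := fun a ha => hmem a (List.mem_toFinset.mp ha)
    have hbound : ∑ a ∈ L.toFinset, L.count a ≤ L.toFinset.card * (τ - 1) := by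
      refine Finset.sum_le_card_nsmul _ _ _ fun a ha => ?_
      have := hcon a (hsub ha)
      omega
    have hc1 : L.toFinset.card ≤ Hc := le_trans (Finset.card_le_card hsub) hcard
    have : τ * Hc ≤ Hc * (τ - 1) := by
      calc τ * Hc = L.length := hlen.symm
        _ ≤ L.toFinset.card * (τ - 1) := by rw [← hsum] at *; exact hbound
        _ ≤ Hc * (τ - 1) := Nat.mul_le_mul_right _ hc1
    nlinarith [Nat.sub_lt hτ Nat.one_pos, hH, hτ]
  obtain ⟨Y, hY𝔽, hcount⟩ := hpigeon
  have hsubl : (List.replicate τ Y).Sublist L := List.replicate_sublist_iff.mpr hcount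
  obtain ⟨j, hj⟩ := (h𝔽 Y hY𝔽).2.2.2
  have hgood : ∀ A ∈ L, (∀ i j, 0 ≤ A i j) ∧ (∀ i, μ₀ ≤ A i i) := by
    intro A hA
    obtain ⟨h1, h2, -, -⟩ := h𝔽 A (hmem A hA)
    exact ⟨h1, h2⟩
  have hYτ_nonneg : ∀ i j, 0 ≤ (Y ^ τ) i j := by
    intro i j
    have := prod_entries_nonneg (List.replicate τ Y)
      (fun B hB => by rw [List.eq_of_mem_replicate hB]; exact (h𝔽 Y hY𝔽).1) i j
    rwa [List.prod_replicate] at this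
  have hpos : ∀ i, 0 < L.prod i j := by
    intro i
    refine prod_pos_of_sublist hμ₀0 hsubl hgood i j ?_
    rw [List.prod_replicate]
    exact lt_of_le_of_ne (hYτ_nonneg i j) (Ne.symm (hj i))
  refine ⟨j, fun i => ?_⟩
  have := prod_entries_lb hμ₀0 L
    (fun A hA => ⟨(h𝔽 A (hmem A hA)).1, (h𝔽 A (hmem A hA)).2.2.1⟩) i j (hpos i).ne'
  rwa [hlen] at this
end

section
/- For any θ_1, …, θ_N, θ' ∈ ℝ^D, the difference between the local and global increments is bounded as (1/N) Σ_{n=1}^N ‖g_n^k(θ_n) − ḡ^k(θ')‖² ≤ 2((1+γ)/(1−γλ))² (1/N) Σ_{n=1}^N ‖θ_n − θ'‖² + 2δ²/(1−γλ)². -/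
open scoped RealInnerProductSpace

/-- bound on the difference between local TD(λ) increments
`g_n^k(θ_n) = (r_n^k + ⟪γφ^{k+1} - φ^k, θ_n⟫) z^k` and the global increment
`ḡ^k(θ') = (1/N) ∑_n g_n^k(θ')`. -/
theorem local_global_increment_bound
    (N D k : ℕ) (hN : 1 ≤ N) (hD : 1 ≤ D)
    (γ lam δ : ℝ) (hγ0 : 0 < γ) (hγ1 : γ < 1)
    (hlam0 : 0 ≤ lam) (hlam1 : lam ≤ 1) (hδ : 0 ≤ δ)
    (φ : ℕ → EuclideanSpace ℝ (Fin D)) (hφ : ∀ κ, κ ≤ k + 1 → ‖φ κ‖ ≤ 1)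
    (r : Fin N → ℝ)
    (hvar : (1 / N : ℝ) * ∑ n, (r n - (1 / N : ℝ) * ∑ m, r m) ^ 2 ≤ δ ^ 2)
    (θ : Fin N → EuclideanSpace ℝ (Fin D)) (θ' : EuclideanSpace ℝ (Fin D)) :
    (1 / N : ℝ) * ∑ n,
        ‖(r n + ⟪γ • φ (k + 1) - φ k, θ n⟫) •
            (∑ κ ∈ Finset.range (k + 1), (γ * lam) ^ (k - κ) • φ κ)
          - (N : ℝ)⁻¹ • ∑ m, (r m + ⟪γ • φ (k + 1) - φ k, θ'⟫) •
            (∑ κ ∈ Finset.range (k + 1), (γ * lam) ^ (k - κ) • φ κ)‖ ^ 2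
      ≤ 2 * ((1 + γ) / (1 - γ * lam)) ^ 2 * ((1 / N : ℝ) * ∑ n, ‖θ n - θ'‖ ^ 2)
        + 2 * δ ^ 2 / (1 - γ * lam) ^ 2 := by
  have hNpos : (0:ℝ) < N := by exact_mod_cast Nat.lt_of_lt_of_le Nat.zero_lt_one hN
  set Z : EuclideanSpace ℝ (Fin D) :=
    ∑ κ ∈ Finset.range (k + 1), (γ * lam) ^ (k - κ) • φ κ with hZdef
  set c : EuclideanSpace ℝ (Fin D) := γ • φ (k + 1) - φ k with hcdef
  set rb : ℝ := (1 / N : ℝ) * ∑ m, r m with hrb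
  have hgl0 : 0 ≤ γ * lam := mul_nonneg hγ0.le hlam0
  have hgl1 : γ * lam < 1 := by nlinarith
  have hden : 0 < 1 - γ * lam := by linarith
  have hZnorm : ‖Z‖ ≤ 1 / (1 - γ * lam) := by
    calc ‖Z‖ ≤ ∑ κ ∈ Finset.range (k + 1), ‖(γ * lam) ^ (k - κ) • φ κ‖ :=
          norm_sum_le _ _
      _ ≤ ∑ κ ∈ Finset.range (k + 1), (γ * lam) ^ (k - κ) := by
          apply Finset.sum_le_sum
          intro κ hκ
          rw [norm_smul, Real.norm_eq_abs, abs_of_nonneg (pow_nonneg hgl0 _)]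
          exact mul_le_of_le_one_right (pow_nonneg hgl0 _)
            (hφ κ (by simp at hκ; omega))
      _ = ∑ j ∈ Finset.range (k + 1), (γ * lam) ^ j := by
          rw [← Finset.sum_range_reflect (fun j => (γ * lam) ^ j) (k + 1)]
          exact Finset.sum_congr rfl fun j hj => by congr 1
      _ ≤ 1 / (1 - γ * lam) := by
          rw [geom_sum_eq (ne_of_lt hgl1)]
          have heq : ((γ * lam) ^ (k + 1) - 1) / (γ * lam - 1)
              = (1 - (γ * lam) ^ (k + 1)) / (1 - γ * lam) := by
            rw [← neg_div_neg_eq]; ring_nf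
          rw [heq, div_le_div_iff₀ hden hden]
          have : 0 ≤ (γ * lam) ^ (k + 1) := pow_nonneg hgl0 _
          nlinarith
  have hcnorm : ‖c‖ ≤ 1 + γ := by
    calc ‖c‖ ≤ ‖γ • φ (k + 1)‖ + ‖φ k‖ := norm_sub_le _ _
      _ ≤ γ * 1 + 1 := by
          rw [norm_smul, Real.norm_eq_abs, abs_of_nonneg hγ0.le]
          have h1 := hφ (k + 1) le_rfl
          have h2 := hφ k (by omega)
          have := mul_le_mul_of_nonneg_left h1 hγ0.le
          linarith
      _ ≤ 1 + γ := by linarith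
  have key : ∀ n : Fin N,
      (r n + ⟪c, θ n⟫) • Z - (N : ℝ)⁻¹ • ∑ m, (r m + ⟪c, θ'⟫) • Z
        = ((r n - rb) + ⟪c, θ n - θ'⟫) • Z := by
    intro n
    have h1 : ∑ m : Fin N, (r m + ⟪c, θ'⟫) • Z
        = ((∑ m, r m) + (N : ℝ) * ⟪c, θ'⟫) • Z := by
      rw [← Finset.sum_smul]
      congr 1
      rw [Finset.sum_add_distrib, Finset.sum_const, Finset.card_univ,
        Fintype.card_fin, nsmul_eq_mul]
    rw [h1, smul_smul, ← sub_smul]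
    congr 1
    rw [inner_sub_right, hrb]
    field_simp
    ring
  have hnormsq : ∀ n : Fin N,
      ‖((r n - rb) + ⟪c, θ n - θ'⟫) • Z‖ ^ 2
        = ((r n - rb) + ⟪c, θ n - θ'⟫) ^ 2 * ‖Z‖ ^ 2 := by
    intro n
    rw [norm_smul, mul_pow, Real.norm_eq_abs, sq_abs]
  have hZ2 : ‖Z‖ ^ 2 ≤ (1 / (1 - γ * lam)) ^ 2 :=
    pow_le_pow_left₀ (norm_nonneg Z) hZnorm 2
  have hb : ∀ n : Fin N, ⟪c, θ n - θ'⟫ ^ 2 ≤ (1 + γ) ^ 2 * ‖θ n - θ'‖ ^ 2 := by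
    intro n
    have h := abs_real_inner_le_norm c (θ n - θ')
    have h2 : 0 ≤ ‖θ n - θ'‖ := norm_nonneg _
    have h4 : |(⟪c, θ n - θ'⟫ : ℝ)| ≤ (1 + γ) * ‖θ n - θ'‖ :=
      h.trans (mul_le_mul_of_nonneg_right hcnorm h2)
    calc (⟪c, θ n - θ'⟫ : ℝ) ^ 2 = |(⟪c, θ n - θ'⟫ : ℝ)| ^ 2 := (sq_abs _).symm
      _ ≤ ((1 + γ) * ‖θ n - θ'‖) ^ 2 := pow_le_pow_left₀ (abs_nonneg _) h4 2
      _ = (1 + γ) ^ 2 * ‖θ n - θ'‖ ^ 2 := by ring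
  have hpt : ∀ n : Fin N,
      ((r n - rb) + ⟪c, θ n - θ'⟫) ^ 2 * ‖Z‖ ^ 2
        ≤ (2 * (r n - rb) ^ 2 + 2 * (1 + γ) ^ 2 * ‖θ n - θ'‖ ^ 2)
            * (1 / (1 - γ * lam)) ^ 2 := by
    intro n
    have hs : ((r n - rb) + ⟪c, θ n - θ'⟫) ^ 2
        ≤ 2 * (r n - rb) ^ 2 + 2 * (1 + γ) ^ 2 * ‖θ n - θ'‖ ^ 2 := by
      nlinarith [sq_nonneg ((r n - rb) - ⟪c, θ n - θ'⟫), hb n]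
    exact mul_le_mul hs hZ2 (sq_nonneg _) (by positivity)
  have hsum : ∑ n : Fin N,
      ‖(r n + ⟪c, θ n⟫) • Z - (N : ℝ)⁻¹ • ∑ m, (r m + ⟪c, θ'⟫) • Z‖ ^ 2
        = ∑ n, ((r n - rb) + ⟪c, θ n - θ'⟫) ^ 2 * ‖Z‖ ^ 2 :=
    Finset.sum_congr rfl fun n _ => by rw [key n, hnormsq n]
  rw [hsum]
  have step1 : (1 / N : ℝ) * ∑ n, ((r n - rb) + ⟪c, θ n - θ'⟫) ^ 2 * ‖Z‖ ^ 2
      ≤ (1 / N : ℝ) * ∑ n, (2 * (r n - rb) ^ 2 + 2 * (1 + γ) ^ 2 * ‖θ n - θ'‖ ^ 2)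
          * (1 / (1 - γ * lam)) ^ 2 := by
    apply mul_le_mul_of_nonneg_left _ (by positivity)
    exact Finset.sum_le_sum fun n _ => hpt n
  have step2 : (1 / N : ℝ) * ∑ n, (2 * (r n - rb) ^ 2 + 2 * (1 + γ) ^ 2 * ‖θ n - θ'‖ ^ 2)
          * (1 / (1 - γ * lam)) ^ 2
      = (1 / (1 - γ * lam)) ^ 2 *
          (2 * ((1 / N : ℝ) * ∑ n, (r n - rb) ^ 2)
            + 2 * (1 + γ) ^ 2 * ((1 / N : ℝ) * ∑ n, ‖θ n - θ'‖ ^ 2)) := by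
    rw [← Finset.sum_mul, Finset.sum_add_distrib,
      show (∑ x : Fin N, 2 * (r x - rb) ^ 2) = 2 * ∑ x : Fin N, (r x - rb) ^ 2 by
        rw [Finset.mul_sum],
      show (∑ x : Fin N, 2 * (1 + γ) ^ 2 * ‖θ x - θ'‖ ^ 2)
          = 2 * (1 + γ) ^ 2 * ∑ x : Fin N, ‖θ x - θ'‖ ^ 2 by rw [Finset.mul_sum]]
    ring
  have hθnn : (0:ℝ) ≤ (1 / N : ℝ) * ∑ n, ‖θ n - θ'‖ ^ 2 := by positivity
  calc (1 / N : ℝ) * ∑ n, ((r n - rb) + ⟪c, θ n - θ'⟫) ^ 2 * ‖Z‖ ^ 2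
      ≤ (1 / (1 - γ * lam)) ^ 2 *
          (2 * ((1 / N : ℝ) * ∑ n, (r n - rb) ^ 2)
            + 2 * (1 + γ) ^ 2 * ((1 / N : ℝ) * ∑ n, ‖θ n - θ'‖ ^ 2)) := by
        rw [← step2]; exact step1
    _ ≤ (1 / (1 - γ * lam)) ^ 2 *
          (2 * δ ^ 2 + 2 * (1 + γ) ^ 2 * ((1 / N : ℝ) * ∑ n, ‖θ n - θ'‖ ^ 2)) := by
        apply mul_le_mul_of_nonneg_left _ (by positivity)
        have := hvar
        linarith
    _ = 2 * ((1 + γ) / (1 - γ * lam)) ^ 2 * ((1 / N : ℝ) * ∑ n, ‖θ n - θ'‖ ^ 2)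
        + 2 * δ ^ 2 / (1 - γ * lam) ^ 2 := by
        field_simp
        ring
end

section
/- For all k ≥ 0, x^k ≤ (2α₂/(1−α₁)) (η^k)². -/
/-- if `x^{k+1} ≤ α₁ x^k + α₂ (η^k)²`, `x⁰ ≤ α₂ (η^0)²`, and the step sizes
satisfy `1 ≤ (η^{k-1}/η^k)² ≤ 2/(1+α₁)`, then `x^k ≤ (2α₂/(1-α₁)) (η^k)²` for all `k`. -/
theorem recursion_bound
    (α₁ α₂ : ℝ) (hα₁0 : 0 < α₁) (hα₁1 : α₁ < 1) (hα₂ : 0 ≤ α₂)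
    (η : ℕ → ℝ) (hη : ∀ k, 0 < η k)
    (hηr : ∀ k, 1 ≤ k → 1 ≤ (η (k - 1) / η k) ^ 2 ∧ (η (k - 1) / η k) ^ 2 ≤ 2 / (1 + α₁))
    (x : ℕ → ℝ)
    (hx : ∀ k, x (k + 1) ≤ α₁ * x k + α₂ * (η k) ^ 2)
    (hx0 : x 0 ≤ α₂ * (η 0) ^ 2) :
    ∀ k, x k ≤ 2 * α₂ / (1 - α₁) * (η k) ^ 2 := by
  have h1 : (0:ℝ) < 1 - α₁ := by linarith
  have h2 : (0:ℝ) < 1 + α₁ := by linarith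
  intro k
  induction k with
  | zero =>
    have hC : α₂ ≤ 2 * α₂ / (1 - α₁) := by
      rw [le_div_iff₀ h1]; nlinarith
    calc x 0 ≤ α₂ * (η 0) ^ 2 := hx0
      _ ≤ 2 * α₂ / (1 - α₁) * (η 0) ^ 2 := by
          apply mul_le_mul_of_nonneg_right hC (sq_nonneg _)
  | succ k ih =>
    have hr := (hηr (k + 1) (Nat.le_add_left 1 k)).2
    simp only [Nat.add_sub_cancel] at hr
    have hk1 := hη (k + 1)
    have hstep : (η k) ^ 2 ≤ 2 / (1 + α₁) * (η (k + 1)) ^ 2 := by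
      rw [div_pow, div_le_div_iff₀ (pow_pos hk1 2) h2] at hr
      rw [div_mul_eq_mul_div, le_div_iff₀ h2]
      nlinarith
    have := hx k
    have hC : 0 ≤ 2 * α₂ / (1 - α₁) := by positivity
    calc x (k + 1) ≤ α₁ * x k + α₂ * (η k) ^ 2 := hx k
      _ ≤ α₁ * (2 * α₂ / (1 - α₁) * (η k) ^ 2) + α₂ * (η k) ^ 2 := by nlinarith
      _ = α₂ * (1 + α₁) / (1 - α₁) * (η k) ^ 2 := by field_simp; ring
      _ ≤ α₂ * (1 + α₁) / (1 - α₁) * (2 / (1 + α₁) * (η (k + 1)) ^ 2) := by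
          apply mul_le_mul_of_nonneg_left hstep (by positivity)
      _ = 2 * α₂ / (1 - α₁) * (η (k + 1)) ^ 2 := by field_simp
end

section
/- For every real ε > 0 and all integers k ≥ 1 and k⁰ ≥ 1 with ε ≤ k + k⁰, it holds that (ε/(k+k⁰)) Σ_{i=0}^{k} ((i+k⁰)/(k+k⁰))^{ε−1} ≤ 2. -/
/-- for real `ε > 0` and integers `k, k⁰ ≥ 1` with `ε ≤ k + k⁰`,
`(ε/(k+k⁰)) ∑_{i=0}^{k} ((i+k⁰)/(k+k⁰))^{ε-1} ≤ 2`. -/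
theorem rpow_sum_bound
    (ε : ℝ) (hε : 0 < ε) (k k₀ : ℕ) (hk : 1 ≤ k) (hk₀ : 1 ≤ k₀)
    (hεk : ε ≤ (k : ℝ) + k₀) :
    ε / ((k : ℝ) + k₀) *
        ∑ i ∈ Finset.range (k + 1), (((i : ℝ) + k₀) / ((k : ℝ) + k₀)) ^ (ε - 1) ≤ 2 := by
  have hk₀1 : (1:ℝ) ≤ (k₀:ℝ) := by exact_mod_cast hk₀
  have hk1 : (1:ℝ) ≤ (k:ℝ) := by exact_mod_cast hk
  set n : ℝ := (k:ℝ) + k₀ with hn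
  have hn1 : (1:ℝ) ≤ n := by simp only [hn]; linarith
  have hn0 : (0:ℝ) < n := by linarith
  set f : ℝ → ℝ := fun t => t ^ (ε-1) * n ^ (1-ε) with hf
  have hterm : ∀ x : ℝ, 0 ≤ x → (x / n) ^ (ε-1) = f x := by
    intro x hx
    simp only [hf]
    rw [Real.div_rpow hx hn0.le, div_eq_mul_inv, ← Real.rpow_neg hn0.le]
    ring_nf
  have hkk : (k₀:ℝ) + (k:ℕ) = n := by rw [hn]; ring
  have hInt : (∫ t in (k₀:ℝ)..((k₀:ℝ)+(k:ℕ)), f t) ≤ n / ε := by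
    simp only [hf]
    rw [intervalIntegral.integral_mul_const,
      integral_rpow (Or.inl (by linarith : (-1:ℝ) < ε - 1))]
    have h1 : ε - 1 + 1 = ε := by ring
    rw [h1, hkk]
    have h2 : (0:ℝ) ≤ (k₀:ℝ) ^ ε := Real.rpow_nonneg (by linarith) _
    calc (n ^ ε - (k₀:ℝ) ^ ε) / ε * n ^ (1-ε) ≤ n ^ ε / ε * n ^ (1-ε) := by
          apply mul_le_mul_of_nonneg_right _ (Real.rpow_nonneg hn0.le _)
          gcongr
          linarith
      _ = n / ε := by
          rw [div_mul_eq_mul_div, ← Real.rpow_add hn0]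
          norm_num
  rcases le_total ε 1 with hε1 | hε1
  · -- antitone case
    have hanti : AntitoneOn f (Set.Icc (k₀:ℝ) ((k₀:ℝ)+(k:ℕ))) := by
      intro x hx y hy hxy
      simp only [hf]
      apply mul_le_mul_of_nonneg_right _ (Real.rpow_nonneg hn0.le _)
      exact Real.rpow_le_rpow_of_nonpos (by linarith [hx.1]) hxy (by linarith)
    have hsum := hanti.sum_le_integral
    rw [Finset.sum_range_succ']
    have key : ∑ i ∈ Finset.range k, ((((i+1:ℕ):ℝ) + k₀) / n) ^ (ε-1) ≤ n / ε := by
      refine le_trans (le_of_eq ?_) (hsum.trans hInt)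
      apply Finset.sum_congr rfl
      intro i _
      rw [hterm _ (by positivity)]
      congr 1
      push_cast; ring
    have hfirst : ((((0:ℕ):ℝ) + k₀) / n) ^ (ε-1) ≤ n ^ (1-ε) := by
      have h1n : ((1:ℝ)/n) ^ (ε-1) = n ^ (1-ε) := by
        rw [show (1-ε) = -(ε-1) by ring, Real.rpow_neg hn0.le,
          Real.div_rpow zero_le_one hn0.le, Real.one_rpow, one_div]
      rw [← h1n]
      apply Real.rpow_le_rpow_of_nonpos (by positivity) _ (by linarith)
      gcongr
      simpa using hk₀1
    refine le_trans (mul_le_mul_of_nonneg_left (add_le_add key hfirst) (by positivity)) ?_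
    have e1 : ε / n * (n / ε) = 1 := by field_simp
    have e2 : ε / n * n ^ (1-ε) = ε * n ^ (-ε) := by
      rw [show (1-ε) = 1 + (-ε) by ring, Real.rpow_add hn0, Real.rpow_one]
      field_simp
    rw [mul_add, e1, e2]
    have h3 : n ^ (-ε) ≤ 1 := Real.rpow_le_one_of_one_le_of_nonpos hn1 (by linarith)
    nlinarith [Real.rpow_nonneg hn0.le (-ε)]
  · -- monotone case
    have hmono : MonotoneOn f (Set.Icc (k₀:ℝ) ((k₀:ℝ)+(k:ℕ))) := by
      intro x hx y hy hxy
      simp only [hf]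
      apply mul_le_mul_of_nonneg_right _ (Real.rpow_nonneg hn0.le _)
      exact Real.rpow_le_rpow (by linarith [hx.1]) hxy (by linarith)
    have hsum := hmono.sum_le_integral
    rw [Finset.sum_range_succ]
    have key : ∑ i ∈ Finset.range k, (((i:ℝ) + k₀) / n) ^ (ε-1) ≤ n / ε := by
      refine le_trans (le_of_eq ?_) (hsum.trans hInt)
      apply Finset.sum_congr rfl
      intro i _
      rw [hterm _ (by positivity)]
      congr 1
      ring
    have hlast : (((k:ℝ) + k₀) / n) ^ (ε-1) ≤ 1 := by
      rw [← hn, div_self hn0.ne', Real.one_rpow]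
    refine le_trans (mul_le_mul_of_nonneg_left (add_le_add key hlast) (by positivity)) ?_
    have e1 : ε / n * (n / ε + 1) = 1 + ε / n := by field_simp
    rw [e1]
    have : ε / n ≤ 1 := (div_le_one hn0).mpr hεk
    linarith
end

section
/- For all reals η > 0 and ε ≥ 2 and all integers k⁰ and k with k⁰ ≥ η and k ≥ 0: Σ_{i=0}^k ((i+k⁰)/η)^{ε−2} ln((i+k⁰)/η) ≤ (η/(ε−1)²) ((ε−1) ln((k+1+k⁰)/η) + 1) ((k+1+k⁰)/η)^{ε−1}. -/
/-- for `η > 0`, `ε ≥ 2`, integers `k⁰ ≥ η` and `k ≥ 0`,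
`∑_{i=0}^k ((i+k⁰)/η)^{ε-2} ln((i+k⁰)/η)
   ≤ (η/(ε-1)²)((ε-1) ln((k+1+k⁰)/η) + 1)((k+1+k⁰)/η)^{ε-1}`. -/
theorem log_sum_bound_eps_ge_two
    (η ε : ℝ) (hη : 0 < η) (hε : 2 ≤ ε) (k₀ k : ℕ) (hk₀ : η ≤ (k₀ : ℝ)) :
    ∑ i ∈ Finset.range (k + 1),
        (((i : ℝ) + k₀) / η) ^ (ε - 2) * Real.log (((i : ℝ) + k₀) / η)
      ≤ η / (ε - 1) ^ 2 * ((ε - 1) * Real.log (((k : ℝ) + 1 + k₀) / η) + 1)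
        * (((k : ℝ) + 1 + k₀) / η) ^ (ε - 1) := by
  have hε1 : (0:ℝ) < ε - 1 := by linarith
  have hη' : η ≠ 0 := hη.ne'
  set f : ℝ → ℝ := fun x => ((x + k₀)/η) ^ (ε-2) * Real.log ((x + k₀)/η) with hfdef
  have h1 : ∀ x : ℝ, 0 ≤ x → 1 ≤ (x + k₀)/η := by
    intro x hx
    rw [le_div_iff₀ hη]; linarith
  have hmono : MonotoneOn f (Set.Icc (0:ℝ) (0 + ((k+1:ℕ):ℝ))) := by
    intro x hx y hy hxy
    have h1x := h1 x hx.1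
    have h1y := h1 y hy.1
    have hxy' : (x + k₀)/η ≤ (y + k₀)/η := by gcongr
    exact mul_le_mul (Real.rpow_le_rpow (by linarith) hxy' (by linarith))
      (Real.log_le_log (by linarith) hxy') (Real.log_nonneg h1x) (by positivity)
  have hsum : ∑ i ∈ Finset.range (k+1), f ((0:ℝ) + i) ≤ ∫ x in (0:ℝ)..(0 + ((k+1:ℕ):ℝ)), f x :=
    hmono.sum_le_integral
  set F : ℝ → ℝ := fun x =>
    η/(ε-1)^2 * (((x + k₀)/η)^(ε-1) * ((ε-1) * Real.log ((x+k₀)/η) - 1)) with hFdef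
  have hderiv : ∀ x ∈ Set.uIcc (0:ℝ) ((0:ℝ) + ((k+1:ℕ):ℝ)), HasDerivAt F (f x) x := by
    intro x hx
    rw [Set.uIcc_of_le (by positivity)] at hx
    have hu1 : 1 ≤ (x + k₀)/η := h1 x hx.1
    have hu0 : (0:ℝ) < (x + k₀)/η := by linarith
    have hu : HasDerivAt (fun x : ℝ => (x + k₀)/η) (1/η) x := by
      simpa using ((hasDerivAt_id x).add_const (k₀:ℝ)).div_const η
    have hpow := hu.rpow_const (p := ε-1) (Or.inl hu0.ne')
    have hlog : HasDerivAt (fun x : ℝ => (ε-1) * Real.log ((x+k₀)/η) - 1)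
        ((ε-1) * ((1/η) / ((x+k₀)/η))) x := ((hu.log hu0.ne').const_mul (ε-1)).sub_const 1
    have hF := (hpow.mul hlog).const_mul (η/(ε-1)^2)
    convert hF using 1
    · rfl
    · rfl
    · rfl
    have key : ((x+k₀)/η)^(ε-1) = ((x+k₀)/η)^(ε-2) * ((x+k₀)/η) := by
      rw [show ε-1 = (ε-2)+1 by ring, Real.rpow_add_one hu0.ne']
    have key2 : ε - 1 - 1 = ε - 2 := by ring
    rw [key2, key]
    have hx0 : x + (k₀:ℝ) ≠ 0 := by
      have h0 : (0:ℝ) < k₀ := lt_of_lt_of_le hη hk₀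
      have := hx.1
      positivity
    field_simp
    ring
  have hcont : ContinuousOn f (Set.uIcc (0:ℝ) ((0:ℝ) + ((k+1:ℕ):ℝ))) := by
    rw [Set.uIcc_of_le (by positivity)]
    have hne : ∀ x ∈ Set.Icc (0:ℝ) (0 + ((k+1:ℕ):ℝ)), (x + (k₀:ℝ))/η ≠ 0 := by
      intro x hx
      have := h1 x hx.1
      intro h; rw [h] at this; linarith
    have hcu : ContinuousOn (fun x : ℝ => (x + (k₀:ℝ))/η) (Set.Icc (0:ℝ) (0 + ((k+1:ℕ):ℝ))) := by
      fun_prop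
    exact (hcu.rpow_const (fun x hx => Or.inl (hne x hx))).mul (hcu.log hne)
  have hFTC : ∫ x in (0:ℝ)..(0 + ((k+1:ℕ):ℝ)), f x = F (0 + ((k+1:ℕ):ℝ)) - F 0 :=
    intervalIntegral.integral_eq_sub_of_hasDerivAt hderiv hcont.intervalIntegrable
  -- final bound
  set a0 : ℝ := (k₀:ℝ)/η with ha0
  set b : ℝ := ((k:ℝ) + 1 + k₀)/η with hbdef
  have ha1 : 1 ≤ a0 := by rw [ha0, le_div_iff₀ hη]; linarith
  have hb1 : a0 ≤ b := by
    rw [ha0, hbdef]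
    gcongr
    linarith [Nat.cast_nonneg (α := ℝ) k]
  have hApow : a0^(ε-1) ≤ b^(ε-1) := Real.rpow_le_rpow (by positivity) hb1 hε1.le
  have hLa : 0 ≤ Real.log a0 := Real.log_nonneg ha1
  have hA0 : 0 ≤ a0^(ε-1) := by positivity
  have hstep : a0^(ε-1) * (1 - (ε-1)*Real.log a0) ≤ 2 * b^(ε-1) := by
    have h1' : a0^(ε-1) * (1 - (ε-1)*Real.log a0) ≤ a0^(ε-1) * 1 := by
      apply mul_le_mul_of_nonneg_left _ hA0
      nlinarith
    have hB0 : 0 ≤ b^(ε-1) := by positivity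
    nlinarith
  have hc : (0:ℝ) < η/(ε-1)^2 := by positivity
  have hfinal : F (0 + ((k+1:ℕ):ℝ)) - F 0 ≤
      η / (ε - 1) ^ 2 * ((ε - 1) * Real.log b + 1) * b^(ε-1) := by
    have e1 : (0 + ((k+1:ℕ):ℝ) + k₀)/η = b := by rw [hbdef]; push_cast; ring_nf
    have e2 : ((0:ℝ) + k₀)/η = a0 := by rw [ha0]; ring_nf
    rw [hFdef]
    simp only [e1, e2]
    nlinarith [mul_le_mul_of_nonneg_left hstep hc.le]
  calc ∑ i ∈ Finset.range (k + 1),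
        (((i : ℝ) + k₀) / η) ^ (ε - 2) * Real.log (((i : ℝ) + k₀) / η)
      = ∑ i ∈ Finset.range (k+1), f ((0:ℝ) + i) := by
        apply Finset.sum_congr rfl; intro i _; rw [hfdef]; norm_num
    _ ≤ ∫ x in (0:ℝ)..(0 + ((k+1:ℕ):ℝ)), f x := hsum
    _ = F (0 + ((k+1:ℕ):ℝ)) - F 0 := hFTC
    _ ≤ η / (ε - 1) ^ 2 * ((ε - 1) * Real.log b + 1) * b^(ε-1) := hfinal
end

section
/- For all reals η > 0 and 1 < ε < 2 and all integers k⁰ ≥ 2 with (k⁰−1)/η ≥ e^{1/(2−ε)}, and every integer k ≥ 0: Σ_{i=0}^k ((i+k⁰)/η)^{ε−2} ln((i+k⁰)/η) ≤ (η/(ε−1)²) ((ε−1) ln((k+k⁰)/η) + 1) ((k+k⁰)/η)^{ε−1}. -/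
open Real MeasureTheory

/-- for `η > 0`, `1 < ε < 2`, integers `k⁰ ≥ 2` with
`(k⁰-1)/η ≥ e^{1/(2-ε)}`, and every integer `k ≥ 0`,
`∑_{i=0}^k ((i+k⁰)/η)^{ε-2} ln((i+k⁰)/η)
   ≤ (η/(ε-1)²)((ε-1) ln((k+k⁰)/η) + 1)((k+k⁰)/η)^{ε-1}`. -/
theorem log_sum_bound_eps_between_one_two
    (η ε : ℝ) (hη : 0 < η) (hε1 : 1 < ε) (hε2 : ε < 2) (k₀ k : ℕ) (hk₀ : 2 ≤ k₀)
    (hk₀' : Real.exp (1 / (2 - ε)) ≤ ((k₀ : ℝ) - 1) / η) :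
    ∑ i ∈ Finset.range (k + 1),
        (((i : ℝ) + k₀) / η) ^ (ε - 2) * Real.log (((i : ℝ) + k₀) / η)
      ≤ η / (ε - 1) ^ 2 * ((ε - 1) * Real.log (((k : ℝ) + k₀) / η) + 1)
        * (((k : ℝ) + k₀) / η) ^ (ε - 1) := by
  have hk2 : (2:ℝ) ≤ (k₀:ℝ) := by exact_mod_cast hk₀
  set a : ℝ := (k₀:ℝ) - 1 with ha_def
  have ha1 : (1:ℝ) ≤ a := by simp only [ha_def]; linarith
  have ha0 : 0 < a := by linarith
  set f : ℝ → ℝ := fun x => (x / η) ^ (ε - 2) * Real.log (x / η) with hf_def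
  set F : ℝ → ℝ := fun x =>
    η / (ε - 1) ^ 2 * ((x / η) ^ (ε - 1) * ((ε - 1) * Real.log (x / η) - 1)) with hF_def
  have hεne : ε - 1 ≠ 0 := by linarith
  have hηne : η ≠ 0 := ne_of_gt hη
  have h2ε : (0:ℝ) < 2 - ε := by linarith
  -- derivative of F is f
  have hderF : ∀ x : ℝ, 0 < x → HasDerivAt F (f x) x := by
    intro x hx
    have ht : 0 < x / η := div_pos hx hη
    have hdiv : HasDerivAt (fun y : ℝ => y / η) (1 / η) x := by
      simpa using (hasDerivAt_id x).div_const η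
    have h1 : HasDerivAt (fun y : ℝ => (y / η) ^ (ε - 1))
        ((ε - 1) * (x / η) ^ (ε - 1 - 1) * (1 / η)) x :=
      by have hh := (Real.hasDerivAt_rpow_const (p := ε - 1) (Or.inl ht.ne')).comp x hdiv; exact hh
    have h2 : HasDerivAt (fun y : ℝ => Real.log (y / η)) ((x / η)⁻¹ * (1 / η)) x :=
      by have hh := (Real.hasDerivAt_log ht.ne').comp x hdiv; exact hh
    have h3 : HasDerivAt (fun y : ℝ => (y / η) ^ (ε - 1) * ((ε - 1) * Real.log (y / η) - 1))
        ((ε - 1) * (x / η) ^ (ε - 1 - 1) * (1 / η) * ((ε - 1) * Real.log (x / η) - 1)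
          + (x / η) ^ (ε - 1) * ((ε - 1) * ((x / η)⁻¹ * (1 / η)))) x :=
      h1.mul ((h2.const_mul (ε - 1)).sub_const 1)
    have h4 := h3.const_mul (η / (ε - 1) ^ 2)
    convert h4 using 1
    · rfl
    · rfl
    have e1 : (x / η) ^ (ε - 1 - 1) = (x / η) ^ (ε - 2) := by
      rw [show ε - 1 - 1 = ε - 2 from by ring]
    have e2 : (x / η) ^ (ε - 1) * (x / η)⁻¹ = (x / η) ^ (ε - 2) := by
      rw [← Real.rpow_neg_one (x / η), ← Real.rpow_add ht,
        show ε - 1 + -1 = ε - 2 from by ring]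
    simp only [hf_def, e1]
    rw [show (x / η) ^ (ε - 1) * ((ε - 1) * ((x / η)⁻¹ * (1 / η)))
        = (ε - 1) * (1 / η) * ((x / η) ^ (ε - 1) * (x / η)⁻¹) from by ring, e2]
    field_simp
    ring
  -- derivative of f
  have hderf : ∀ x : ℝ, 0 < x → HasDerivAt f
      ((ε - 2) * (x / η) ^ (ε - 2 - 1) * (1 / η) * Real.log (x / η)
        + (x / η) ^ (ε - 2) * ((x / η)⁻¹ * (1 / η))) x := by
    intro x hx
    have ht : 0 < x / η := div_pos hx hη
    have hdiv : HasDerivAt (fun y : ℝ => y / η) (1 / η) x := by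
      simpa using (hasDerivAt_id x).div_const η
    have h1 : HasDerivAt (fun y : ℝ => (y / η) ^ (ε - 2))
        ((ε - 2) * (x / η) ^ (ε - 2 - 1) * (1 / η)) x :=
      by have hh := (Real.hasDerivAt_rpow_const (p := ε - 2) (Or.inl ht.ne')).comp x hdiv; exact hh
    have h2 : HasDerivAt (fun y : ℝ => Real.log (y / η)) ((x / η)⁻¹ * (1 / η)) x :=
      by have hh := (Real.hasDerivAt_log ht.ne').comp x hdiv; exact hh
    exact h1.mul h2
  have hle : ∀ x : ℝ, a ≤ x → 1 / (2 - ε) ≤ Real.log (x / η) := by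
    intro x hx
    have ht : 0 < x / η := div_pos (lt_of_lt_of_le ha0 hx) hη
    have h1 : Real.exp (1 / (2 - ε)) ≤ x / η := le_trans hk₀' (by gcongr)
    exact (Real.le_log_iff_exp_le ht).mpr h1
  have hcont : ContinuousOn f (Set.Ici a) := fun x hx =>
    ((hderf x (lt_of_lt_of_le ha0 hx)).differentiableAt.continuousAt).continuousWithinAt
  have hanti : AntitoneOn f (Set.Ici a) := by
    apply antitoneOn_of_deriv_nonpos (convex_Ici a) hcont
    · intro x hx
      rw [interior_Ici] at hx
      exact (hderf x (lt_trans ha0 hx)).differentiableAt.differentiableWithinAt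
    · intro x hx
      rw [interior_Ici] at hx
      have hx0 : 0 < x := lt_trans ha0 hx
      have ht : 0 < x / η := div_pos hx0 hη
      rw [(hderf x hx0).deriv]
      have hL := hle x hx.le
      have h1 : (1:ℝ) ≤ Real.log (x / η) * (2 - ε) := (div_le_iff₀ h2ε).mp hL
      have key : (x / η) ^ (ε - 2) * ((x / η)⁻¹ * (1 / η))
          = (x / η) ^ (ε - 2 - 1) * (1 / η) := by
        rw [Real.rpow_sub_one ht.ne']
        field_simp
      rw [key]
      have hA : 0 ≤ (x / η) ^ (ε - 2 - 1) * (1 / η) :=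
        mul_nonneg (Real.rpow_nonneg ht.le _) (by positivity)
      have hB : (ε - 2) * Real.log (x / η) + 1 ≤ 0 := by nlinarith
      nlinarith [mul_nonneg hA (neg_nonneg.mpr hB)]
  -- integrability
  have hint : ∀ u v : ℝ, a ≤ u → u ≤ v → IntervalIntegrable f volume u v := by
    intro u v hu huv
    apply ContinuousOn.intervalIntegrable
    apply hcont.mono
    rw [Set.uIcc_of_le huv]
    exact fun x hx => le_trans hu hx.1
  -- step bound
  have hstep : ∀ i : ℕ, f ((i:ℝ) + k₀) ≤ ∫ x in ((i:ℝ) + k₀ - 1)..((i:ℝ) + k₀), f x := by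
    intro i
    have hi : (0:ℝ) ≤ (i:ℝ) := Nat.cast_nonneg i
    have hb1 : a ≤ (i:ℝ) + k₀ - 1 := by simp only [ha_def]; linarith
    have h01 : (i:ℝ) + k₀ - 1 ≤ (i:ℝ) + k₀ := by linarith
    have hconst : ∫ _x in ((i:ℝ)+k₀-1)..((i:ℝ)+k₀), f ((i:ℝ)+k₀) = f ((i:ℝ)+k₀) := by
      rw [intervalIntegral.integral_const]
      norm_num
    calc f ((i:ℝ)+k₀) = ∫ _x in ((i:ℝ)+k₀-1)..((i:ℝ)+k₀), f ((i:ℝ)+k₀) := hconst.symm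
      _ ≤ ∫ x in ((i:ℝ)+k₀-1)..((i:ℝ)+k₀), f x := by
          apply intervalIntegral.integral_mono_on h01 intervalIntegrable_const
            (hint _ _ hb1 h01)
          intro x hx
          exact hanti (le_trans hb1 hx.1) (le_trans hb1 h01) hx.2
  have hab : a ≤ (k:ℝ) + k₀ := by
    have : (0:ℝ) ≤ (k:ℝ) := Nat.cast_nonneg k
    simp only [ha_def]; linarith
  -- sum of integrals = integral
  have hsum : ∑ i ∈ Finset.range (k+1), ∫ x in ((i:ℝ)+k₀-1)..((i:ℝ)+k₀), f x
      = ∫ x in a..((k:ℝ)+k₀), f x := by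
    have hadj := intervalIntegral.sum_integral_adjacent_intervals
      (a := fun n : ℕ => (n:ℝ) + k₀ - 1) (f := f) (μ := volume) (n := k+1) ?_
    · have h0 : ((0:ℕ):ℝ) + k₀ - 1 = a := by push_cast; ring
      have hK : ((k+1:ℕ):ℝ) + k₀ - 1 = (k:ℝ) + k₀ := by push_cast; ring
      rw [h0, hK] at hadj
      rw [← hadj]
      apply Finset.sum_congr rfl
      intro i _
      have h1 : ((i+1:ℕ):ℝ) + k₀ - 1 = (i:ℝ) + k₀ := by push_cast; ring
      rw [h1]
    · intro i _
      have hi : (0:ℝ) ≤ (i:ℝ) := Nat.cast_nonneg i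
      have hb1 : a ≤ (i:ℝ) + k₀ - 1 := by simp only [ha_def]; linarith
      have h1 : ((i+1:ℕ):ℝ) + k₀ - 1 = (i:ℝ) + k₀ := by push_cast; ring
      show IntervalIntegrable f volume ((i:ℝ) + k₀ - 1) (((i+1:ℕ):ℝ) + k₀ - 1)
      rw [h1]
      exact hint _ _ hb1 (by linarith)
  -- FTC
  have hftc : ∫ x in a..((k:ℝ)+k₀), f x = F ((k:ℝ)+k₀) - F a := by
    apply intervalIntegral.integral_eq_sub_of_hasDerivAt
    · intro x hx
      rw [Set.uIcc_of_le hab] at hx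
      exact hderF x (lt_of_lt_of_le ha0 hx.1)
    · exact hint _ _ le_rfl hab
  -- chain
  have hchain : ∑ i ∈ Finset.range (k + 1), f ((i:ℝ) + k₀) ≤ F ((k:ℝ)+k₀) - F a := by
    calc ∑ i ∈ Finset.range (k + 1), f ((i:ℝ) + k₀)
        ≤ ∑ i ∈ Finset.range (k+1), ∫ x in ((i:ℝ)+k₀-1)..((i:ℝ)+k₀), f x :=
          Finset.sum_le_sum fun i _ => hstep i
      _ = F ((k:ℝ)+k₀) - F a := by rw [hsum, hftc]
  -- final algebra
  have hk0 : (0:ℝ) ≤ (k:ℝ) := Nat.cast_nonneg k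
  have hT : 0 < ((k:ℝ) + k₀) / η := div_pos (by linarith) hη
  have hS : a / η ≤ ((k:ℝ) + k₀) / η := by gcongr
  have hSpow : (a/η) ^ (ε-1) ≤ (((k:ℝ)+k₀)/η) ^ (ε-1) :=
    Real.rpow_le_rpow (le_of_lt (div_pos ha0 hη)) hS (by linarith)
  have hLa : 0 ≤ Real.log (a/η) :=
    le_trans (by positivity) (hle a le_rfl)
  have hC : 0 < η / (ε-1)^2 := by positivity
  have hSnn : 0 ≤ (a/η) ^ (ε-1) := Real.rpow_nonneg (le_of_lt (div_pos ha0 hη)) _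
  have hTnn : 0 ≤ (((k:ℝ)+k₀)/η) ^ (ε-1) := Real.rpow_nonneg hT.le _
  have hprod : 0 ≤ (a/η) ^ (ε-1) * ((ε-1) * Real.log (a/η)) :=
    mul_nonneg hSnn (mul_nonneg (by linarith) hLa)
  refine le_trans hchain ?_
  simp only [hF_def]
  nlinarith [mul_le_mul_of_nonneg_left hSpow hC.le, mul_nonneg hC.le hprod,
    mul_nonneg hC.le hTnn]
end

section
/- For all reals η > 0 and 0 < ε < 1 and all integers k⁰ ≥ 2 with (k⁰−1)/η ≥ e^{1/(2−ε)}, and every integer k ≥ 0: Σ_{i=0}^k ((i+k⁰)/η)^{ε−2} ln((i+k⁰)/η) ≤ (η/(1−ε)²) ((1−ε) ln((k⁰−1)/η) + 1) ((k⁰−1)/η)^{ε−1}. -/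
/-- for `η > 0`, `0 < ε < 1`, integers `k⁰ ≥ 2` with
`(k⁰-1)/η ≥ e^{1/(2-ε)}`, and every integer `k ≥ 0`,
`∑_{i=0}^k ((i+k⁰)/η)^{ε-2} ln((i+k⁰)/η)
   ≤ (η/(1-ε)²)((1-ε) ln((k⁰-1)/η) + 1)((k⁰-1)/η)^{ε-1}`. -/
theorem log_sum_bound_eps_lt_one
    (η ε : ℝ) (hη : 0 < η) (hε0 : 0 < ε) (hε1 : ε < 1) (k₀ k : ℕ) (hk₀ : 2 ≤ k₀)
    (hk₀' : Real.exp (1 / (2 - ε)) ≤ ((k₀ : ℝ) - 1) / η) :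
    ∑ i ∈ Finset.range (k + 1),
        (((i : ℝ) + k₀) / η) ^ (ε - 2) * Real.log (((i : ℝ) + k₀) / η)
      ≤ η / (1 - ε) ^ 2 * ((1 - ε) * Real.log (((k₀ : ℝ) - 1) / η) + 1)
        * (((k₀ : ℝ) - 1) / η) ^ (ε - 1) := by
  have h2ε : 0 < 2 - ε := by linarith
  have h1ε : 0 < 1 - ε := by linarith
  set A : ℝ := Real.exp (1 / (2 - ε)) with hAdef
  have hApos : 0 < A := Real.exp_pos _
  have hA1 : 1 ≤ A := Real.one_le_exp (by positivity)
  set a : ℝ := ((k₀ : ℝ) - 1) / η with hadef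
  have haA : A ≤ a := hk₀'
  have hapos : 0 < a := lt_of_lt_of_le hApos haA
  set g : ℝ → ℝ := fun t => t ^ (ε - 2) * Real.log t with hgdef
  set F : ℝ → ℝ := fun t => η / (1 - ε) ^ 2 * ((1 - ε) * Real.log t + 1) * t ^ (ε - 1)
    with hFdef
  -- derivative of F
  have hFd : ∀ t : ℝ, 0 < t → HasDerivAt F (-(η * g t)) t := by
    intro t ht
    have h1 : HasDerivAt (fun t : ℝ => (1 - ε) * Real.log t + 1) ((1 - ε) * t⁻¹) t :=
      ((Real.hasDerivAt_log ht.ne').const_mul (1 - ε)).add_const 1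
    have h2 : HasDerivAt (fun t : ℝ => t ^ (ε - 1)) ((ε - 1) * t ^ (ε - 2)) t := by
      have h := Real.hasDerivAt_rpow_const (x := t) (p := ε - 1) (Or.inl ht.ne')
      rwa [show ε - 1 - 1 = ε - 2 by ring] at h
    have h3 := (h1.mul h2).const_mul (η / (1 - ε) ^ 2)
    have e2 : (1 - ε) * t⁻¹ * t ^ (ε - 1) = (1 - ε) * t ^ (ε - 2) := by
      rw [mul_assoc, mul_comm t⁻¹, ← Real.rpow_neg_one t, ← Real.rpow_add ht,
        show ε - 1 + -1 = ε - 2 by ring]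
    rw [e2] at h3
    have h3' : HasDerivAt F (η / (1 - ε) ^ 2 *
        ((1 - ε) * t ^ (ε - 2) + ((1 - ε) * Real.log t + 1) * ((ε - 1) * t ^ (ε - 2)))) t := by
      simpa [hFdef, mul_assoc] using h3
    convert h3' using 1
    show -(η * (t ^ (ε - 2) * Real.log t)) = _
    field_simp
    ring
  -- g is antitone on [A, ∞)
  have hgc : ContinuousOn g (Set.Ici A) := by
    intro t ht
    have ht0 : 0 < t := lt_of_lt_of_le hApos ht
    exact ((Real.continuousAt_rpow_const t _ (Or.inl ht0.ne')).mul
      (Real.continuousAt_log ht0.ne')).continuousWithinAt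
  have hgd : ∀ t : ℝ, 0 < t →
      HasDerivAt g (((ε - 2) * Real.log t + 1) * t ^ (ε - 3)) t := by
    intro t ht
    have h2 : HasDerivAt (fun t : ℝ => t ^ (ε - 2)) ((ε - 2) * t ^ (ε - 3)) t := by
      have h := Real.hasDerivAt_rpow_const (x := t) (p := ε - 2) (Or.inl ht.ne')
      rwa [show ε - 2 - 1 = ε - 3 by ring] at h
    have h3 := h2.mul (Real.hasDerivAt_log ht.ne')
    refine h3.congr_deriv ?_
    have e2 : t ^ (ε - 2) * t⁻¹ = t ^ (ε - 3) := by
      rw [← Real.rpow_neg_one t, ← Real.rpow_add ht,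
        show ε - 2 + -1 = ε - 3 by ring]
    rw [e2]
    ring
  have hganti : AntitoneOn g (Set.Ici A) := by
    apply antitoneOn_of_deriv_nonpos (convex_Ici A) hgc
    · intro t ht
      rw [interior_Ici] at ht
      have ht0 : 0 < t := lt_of_lt_of_le hApos ht.le
      exact (hgd t ht0).differentiableAt.differentiableWithinAt
    · intro t ht
      rw [interior_Ici] at ht
      have ht0 : 0 < t := lt_of_lt_of_le hApos ht.le
      rw [(hgd t ht0).deriv]
      have hlog : 1 / (2 - ε) ≤ Real.log t := by
        rw [← Real.log_exp (1 / (2 - ε))]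
        exact Real.log_le_log (Real.exp_pos _) ht.le
      have h4 : (ε - 2) * Real.log t + 1 ≤ 0 := by
        have h5 : (ε - 2) * Real.log t ≤ (ε - 2) * (1 / (2 - ε)) :=
          mul_le_mul_of_nonpos_left hlog (by linarith)
        have h6 : (ε - 2) * (1 / (2 - ε)) = -1 := by field_simp; ring
        linarith
      exact mul_nonpos_of_nonpos_of_nonneg h4 (Real.rpow_nonneg ht0.le _)
  -- key step via MVT
  have key : ∀ b : ℝ, a ≤ b → g (b + 1 / η) ≤ F b - F (b + 1 / η) := by
    intro b hb
    have hb0 : 0 < b := lt_of_lt_of_le hapos hb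
    have hη1 : 0 < 1 / η := one_div_pos.mpr hη
    have hbb : b < b + 1 / η := by linarith
    have hFc : ContinuousOn F (Set.Icc b (b + 1 / η)) := fun t ht =>
      ((hFd t (lt_of_lt_of_le hb0 ht.1)).continuousAt).continuousWithinAt
    obtain ⟨c, hc, hceq⟩ := exists_hasDerivAt_eq_slope F (fun t => -(η * g t)) hbb hFc
      (fun t ht => hFd t (lt_of_lt_of_le hb0 ht.1.le))
    have hcA : A ≤ c := le_trans haA (le_trans hb hc.1.le)
    have hgc' : g (b + 1 / η) ≤ g c :=
      hganti hcA (le_trans haA (le_trans hb (by linarith))) hc.2.le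
    have he : (b + 1 / η) - b = 1 / η := by ring
    have ee : (F (b + 1 / η) - F b) / (1 / η) = (F (b + 1 / η) - F b) * η := by
      field_simp
    rw [he, ee] at hceq
    have h' : η * g c = η * (F b - F (b + 1 / η)) := by linear_combination -hceq
    have h'' : g c = F b - F (b + 1 / η) := mul_left_cancel₀ hη.ne' h'
    linarith
  -- telescoping
  have hsum : ∑ i ∈ Finset.range (k + 1), g (a + ((i : ℝ) + 1) / η)
      ≤ F a - F (a + ((k : ℝ) + 1) / η) := by
    have htel := Finset.sum_range_sub' (fun i : ℕ => F (a + (i : ℝ) / η)) (k + 1)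
    push_cast at htel
    calc ∑ i ∈ Finset.range (k + 1), g (a + ((i : ℝ) + 1) / η)
        ≤ ∑ i ∈ Finset.range (k + 1),
            (F (a + (i : ℝ) / η) - F (a + ((i : ℝ) + 1) / η)) := by
          apply Finset.sum_le_sum
          intro i _
          have hi : (0:ℝ) ≤ (i : ℝ) / η := by positivity
          have hb : a ≤ a + (i : ℝ) / η := by linarith
          have hk := key (a + (i : ℝ) / η) hb
          have e : a + (i : ℝ) / η + 1 / η = a + ((i : ℝ) + 1) / η := by ring
          rw [e] at hk
          exact hk
      _ = F (a + (0 : ℝ) / η) - F (a + ((k : ℝ) + 1) / η) := htel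
      _ = F a - F (a + ((k : ℝ) + 1) / η) := by norm_num
  -- F nonneg at right endpoint
  have hFnonneg : 0 ≤ F (a + ((k : ℝ) + 1) / η) := by
    have h1 : (0:ℝ) ≤ ((k : ℝ) + 1) / η := by positivity
    have ht1 : (1:ℝ) ≤ a + ((k : ℝ) + 1) / η := by
      have := le_trans hA1 haA; linarith
    have hlog : 0 ≤ Real.log (a + ((k : ℝ) + 1) / η) := Real.log_nonneg ht1
    have h2 : (0:ℝ) ≤ (a + ((k : ℝ) + 1) / η) ^ (ε - 1) :=
      Real.rpow_nonneg (by linarith) _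
    have h3 : (0:ℝ) ≤ η / (1 - ε) ^ 2 := by positivity
    show (0:ℝ) ≤ η / (1 - ε) ^ 2 * ((1 - ε) * Real.log (a + ((k : ℝ) + 1) / η) + 1)
        * (a + ((k : ℝ) + 1) / η) ^ (ε - 1)
    exact mul_nonneg (mul_nonneg h3 (by nlinarith)) h2
  -- finish
  calc ∑ i ∈ Finset.range (k + 1),
        (((i : ℝ) + k₀) / η) ^ (ε - 2) * Real.log (((i : ℝ) + k₀) / η)
      = ∑ i ∈ Finset.range (k + 1), g (a + ((i : ℝ) + 1) / η) := by
        refine Finset.sum_congr rfl fun i _ => ?_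
        have e : a + ((i : ℝ) + 1) / η = ((i : ℝ) + k₀) / η := by
          rw [hadef]; field_simp; ring
        rw [e]
    _ ≤ F a - F (a + ((k : ℝ) + 1) / η) := hsum
    _ ≤ F a := by linarith
end

section
/- Σ_{d=1}^D ⟨p(d) − (1/N)𝟏, V_d⟩² ≤ (c − 1/N) Σ_{n=1}^N ‖v_n − v̄‖², where 𝟏 ∈ ℝ^N is the all-ones vector. -/
/-- for stochastic vectors `p(d)` with entries at most `c`, and a matrix
`V` with rows `v_n` and columns `V_d`,
`∑_d ⟨p(d) - (1/N)𝟏, V_d⟩² ≤ (c - 1/N) ∑_n ‖v_n - v̄‖²` where `v̄ = (1/N)∑_n v_n`. -/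
theorem weighted_column_deviation_bound
    (N D : ℕ) (hN : 1 ≤ N) (hD : 1 ≤ D) (c : ℝ) (hc : 0 < c)
    (V : Fin N → EuclideanSpace ℝ (Fin D))
    (p : Fin D → Fin N → ℝ)
    (hp01 : ∀ d i, 0 ≤ p d i ∧ p d i ≤ 1)
    (hsum : ∀ d, ∑ i, p d i = 1)
    (hpc : ∀ d i, p d i ≤ c) :
    ∑ d, (∑ n, (p d n - 1 / N) * V n d) ^ 2
      ≤ (c - 1 / N) * ∑ n, ‖V n - (N : ℝ)⁻¹ • ∑ m, V m‖ ^ 2 := by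
  have hN0 : (0:ℝ) < N := by exact_mod_cast hN
  set xbar : Fin D → ℝ := fun d => (N:ℝ)⁻¹ * ∑ m, V m d with hxbar
  have hnorm : ∀ n, ‖V n - (N : ℝ)⁻¹ • ∑ m, V m‖ ^ 2 = ∑ d, (V n d - xbar d)^2 := by
    intro n
    rw [EuclideanSpace.norm_eq, Real.sq_sqrt (by positivity)]
    refine Finset.sum_congr rfl fun d _ => ?_
    rw [show ‖(V n - (N:ℝ)⁻¹ • ∑ m, V m) d‖ = |(V n - (N:ℝ)⁻¹ • ∑ m, V m) d| from rfl, sq_abs]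
    congr 1
    simp only [PiLp.sub_apply, PiLp.smul_apply, smul_eq_mul, xbar]
    exact congrArg (fun x => V n d - (N:ℝ)⁻¹ * x) (by simp)
  -- per-coordinate bound
  have key : ∀ d, (∑ n, (p d n - 1 / N) * V n d) ^ 2
      ≤ (c - 1 / N) * ∑ n, (V n d - xbar d)^2 := by
    intro d
    set q : Fin N → ℝ := fun n => p d n - 1 / N with hq
    have hq0 : ∑ n, q n = 0 := by
      simp [q, Finset.sum_sub_distrib, hsum d]
      field_simp
      norm_num
    have hqsq : ∑ n, (q n)^2 ≤ c - 1 / N := by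
      have h1 : ∀ n, (q n)^2 = p d n ^ 2 - 2 * (1/N) * p d n + (1/N)^2 := by
        intro n; simp [q]; ring
      have h2 : ∑ n, (q n)^2 = (∑ n, p d n ^ 2) - 2 * (1/N) + N * (1/N)^2 := by
        simp only [h1, Finset.sum_add_distrib, Finset.sum_sub_distrib,
          ← Finset.mul_sum, hsum d, Finset.sum_const, Finset.card_univ,
          Fintype.card_fin, nsmul_eq_mul]
        ring
      have h3 : ∑ n, p d n ^ 2 ≤ c := by
        calc ∑ n, p d n ^ 2 ≤ ∑ n, c * p d n := by
              refine Finset.sum_le_sum fun n _ => ?_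
              have := (hp01 d n).1
              nlinarith [hpc d n]
          _ = c := by rw [← Finset.mul_sum, hsum d, mul_one]
      rw [h2]
      have : (N:ℝ) * (1/N)^2 = 1/N := by field_simp
      rw [this]; linarith
    have hrw : ∑ n, q n * V n d = ∑ n, q n * (V n d - xbar d) := by
      simp only [mul_sub, Finset.sum_sub_distrib, ← Finset.sum_mul, hq0, zero_mul, sub_zero]
    have hcs := Finset.sum_mul_sq_le_sq_mul_sq Finset.univ q (fun n => V n d - xbar d)
    calc (∑ n, q n * V n d) ^ 2 = (∑ n, q n * (V n d - xbar d))^2 := by rw [hrw]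
      _ ≤ (∑ n, (q n)^2) * ∑ n, (V n d - xbar d)^2 := hcs
      _ ≤ (c - 1/N) * ∑ n, (V n d - xbar d)^2 := by
          apply mul_le_mul_of_nonneg_right hqsq (Finset.sum_nonneg fun n _ => sq_nonneg _)
  calc ∑ d, (∑ n, (p d n - 1 / N) * V n d) ^ 2
      ≤ ∑ d, (c - 1/N) * ∑ n, (V n d - xbar d)^2 := Finset.sum_le_sum fun d _ => key d
    _ = (c - 1/N) * ∑ n, ∑ d, (V n d - xbar d)^2 := by
        rw [← Finset.mul_sum, Finset.sum_comm]
    _ = (c - 1/N) * ∑ n, ‖V n - (N : ℝ)⁻¹ • ∑ m, V m‖ ^ 2 := by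
        simp only [hnorm]
end
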